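/- Let π̃^p ∈ 𝒫^p and define P̃^fd(F|K) := ∫ σ(F|H_i) π̃^p(dH_i|K) (Stieltjes integral with respect to the finitely additive probability π̃^p(·|K) on 𝒜_ℒ) for F ∈ 𝒜 and K ∈ 𝒜_ℒ⁰. Then P̃^fd is a conditional probability on 𝒜 × 𝒜_ℒ⁰, i.e., (C1) P̃^fd(E|H) = P̃^fd(E∩H|H), (C2) P̃^fd(·|H) is a finitely additive probability on 𝒜 for every H ∈ 𝒜_ℒ⁰, and (C3) P̃^fd(E∩F|H) = P̃^fd(E|H)·P̃^fd(F|E∩H) whenever H and E∩H are in 𝒜_ℒ⁰; moreover P̃^fd(F|Ω) = P^d(F) for all F ∈ 𝒜, P̃^fd(F|H_i) = σ(F|H_i) for all F ∈ 𝒜 and H_i ∈ ℒ, and P̃^fd(B|K) = π̃^p(B|K) for all B ∈ 𝒜_ℒ and K ∈ 𝒜_ℒ⁰. -/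

import Mathlib

open Set

open scoped Classical

variable {Ω : Type*}

/-- A field of sets on `Ω`: contains `univ`, closed under complements and finite unions. -/
def IsSetField (𝒜 : Set (Set Ω)) : Prop :=
  Set.univ ∈ 𝒜 ∧ (∀ A ∈ 𝒜, Aᶜ ∈ 𝒜) ∧ ∀ A ∈ 𝒜, ∀ B ∈ 𝒜, A ∪ B ∈ 𝒜

/-- A finitely additive probability on the field `𝒜`. -/
def IsFAP (𝒜 : Set (Set Ω)) (P : Set Ω → ℝ) : Prop :=
  (∀ A ∈ 𝒜, 0 ≤ P A ∧ P A ≤ 1) ∧ P Set.univ = 1 ∧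
    ∀ A ∈ 𝒜, ∀ B ∈ 𝒜, Disjoint A B → P (A ∪ B) = P A + P B

/-- A partition of `Ω` into nonempty pairwise disjoint pieces. -/
def IsPartition {ι : Type*} (H : ι → Set Ω) : Prop :=
  (∀ i, (H i).Nonempty) ∧ (Pairwise fun i j => Disjoint (H i) (H j)) ∧
    (⋃ i, H i) = Set.univ

/-- A field containing every member of the partition `H` and whose members are
unions of members of the partition. -/
def IsFieldOver {ι : Type*} (H : ι → Set Ω) (𝒜L : Set (Set Ω)) : Prop :=
  IsSetField 𝒜L ∧ (∀ i, H i ∈ 𝒜L) ∧ ∀ A ∈ 𝒜L, ∃ S : Set ι, A = ⋃ i ∈ S, H i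

/-- A field containing `𝒜L ∪ 𝒜E` whose members are unions of the atoms `H i ∩ E j`. -/
def IsJointField {ι κ : Type*} (H : ι → Set Ω) (E : κ → Set Ω)
    (𝒜L 𝒜E 𝒜 : Set (Set Ω)) : Prop :=
  IsSetField 𝒜 ∧ 𝒜L ⊆ 𝒜 ∧ 𝒜E ⊆ 𝒜 ∧
    ∀ A ∈ 𝒜, ∃ S : Set (ι × κ), A = ⋃ p ∈ S, H p.1 ∩ E p.2

/-- A strategy on `𝒜 × ℒ`: each `σ (·|H i)` is a finitely additive probability on `𝒜`
equal to `1` on events implied by `H i`. -/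
def IsStrategy {ι : Type*} (𝒜 : Set (Set Ω)) (H : ι → Set Ω) (σ : Set Ω → ι → ℝ) : Prop :=
  ∀ i, IsFAP 𝒜 (fun F => σ F i) ∧ ∀ F ∈ 𝒜, H i ⊆ F → σ F i = 1

/-- A full conditional probability on the field `𝒜` (conditions (C1), (C2), (C3)). -/
def IsFCP (𝒜 : Set (Set Ω)) (P : Set Ω → Set Ω → ℝ) : Prop :=
  (∀ E ∈ 𝒜, ∀ K ∈ 𝒜, K.Nonempty → P E K = P (E ∩ K) K) ∧
  (∀ K ∈ 𝒜, K.Nonempty → IsFAP 𝒜 fun E => P E K) ∧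
  ∀ E ∈ 𝒜, ∀ F ∈ 𝒜, ∀ K ∈ 𝒜, K.Nonempty → (E ∩ K).Nonempty →
    P (E ∩ F) K = P E K * P F (E ∩ K)

/-- `P` extends the prior `π` on `𝒜L` and the strategy `σ` on `𝒜 × ℒ`. -/
def ExtendsPriorStrategy {ι : Type*} (𝒜 𝒜L : Set (Set Ω)) (H : ι → Set Ω)
    (π : Set Ω → ℝ) (σ : Set Ω → ι → ℝ) (P : Set Ω → Set Ω → ℝ) : Prop :=
  (∀ B ∈ 𝒜L, P B Set.univ = π B) ∧ ∀ F ∈ 𝒜, ∀ i, P F (H i) = σ F i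

/-- The set `𝒫` of full conditional probabilities on `𝒜` extending `{π, σ}`. -/
def FCPSet {ι : Type*} (𝒜 𝒜L : Set (Set Ω)) (H : ι → Set Ω)
    (π : Set Ω → ℝ) (σ : Set Ω → ι → ℝ) : Set (Set Ω → Set Ω → ℝ) :=
  {P | IsFCP 𝒜 P ∧ ExtendsPriorStrategy 𝒜 𝒜L H π σ P}

/-- Lower envelope of a set of conditional probabilities at `F|K`. -/
noncomputable def lowEnv (Ps : Set (Set Ω → Set Ω → ℝ)) (F K : Set Ω) : ℝ :=
  sInf ((fun P => P F K) '' Ps)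

/-- Upper envelope of a set of conditional probabilities at `F|K`. -/
noncomputable def upEnv (Ps : Set (Set Ω → Set Ω → ℝ)) (F K : Set Ω) : ℝ :=
  sSup ((fun P => P F K) '' Ps)

/-- A finite partition of `Ω` contained in `𝒜L`. -/
def IsFinPart (𝒜L : Set (Set Ω)) (T : Finset (Set Ω)) : Prop :=
  (↑T : Set (Set Ω)) ⊆ 𝒜L ∧ (∀ A ∈ T, (A : Set Ω).Nonempty) ∧
    (∀ A ∈ T, ∀ B ∈ T, A ≠ B → Disjoint A B) ∧ ⋃₀ (↑T : Set (Set Ω)) = Set.univ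

/-- Lower Stieltjes integral of `X : ℒ → ℝ` with respect to `μ` on `𝒜L`. -/
noncomputable def lowerSInt {ι : Type*} (H : ι → Set Ω) (𝒜L : Set (Set Ω))
    (X : ι → ℝ) (μ : Set Ω → ℝ) : ℝ :=
  sSup {x | ∃ T : Finset (Set Ω), IsFinPart 𝒜L T ∧
    x = ∑ A ∈ T, sInf {y | ∃ i, H i ⊆ A ∧ y = X i} * μ A}

/-- Upper Stieltjes integral of `X : ℒ → ℝ` with respect to `μ` on `𝒜L`. -/
noncomputable def upperSInt {ι : Type*} (H : ι → Set Ω) (𝒜L : Set (Set Ω))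
    (X : ι → ℝ) (μ : Set Ω → ℝ) : ℝ :=
  sInf {x | ∃ T : Finset (Set Ω), IsFinPart 𝒜L T ∧
    x = ∑ A ∈ T, sSup {y | ∃ i, H i ⊆ A ∧ y = X i} * μ A}

/-- `𝒜L`-continuity of a bounded function `X : ℒ → ℝ`. -/
def ALContinuous {ι : Type*} (H : ι → Set Ω) (𝒜L : Set (Set Ω)) (X : ι → ℝ) : Prop :=
  (∃ M : ℝ, ∀ i, |X i| ≤ M) ∧ ∀ t : ℝ, ∀ ε > (0 : ℝ), ∃ A ∈ 𝒜L,
    (⋃ i ∈ {i | t + ε ≤ X i}, H i) ⊆ A ∧ A ⊆ ⋃ i ∈ {i | t ≤ X i}, H i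

/-- Countable additivity of `P` on the field `𝒜`. -/
def CountablyAdditiveOn (𝒜 : Set (Set Ω)) (P : Set Ω → ℝ) : Prop :=
  ∀ A : ℕ → Set Ω, (∀ n, A n ∈ 𝒜) → (Pairwise fun m n => Disjoint (A m) (A n)) →
    (⋃ n, A n) ∈ 𝒜 → HasSum (fun n => P (A n)) (P (⋃ n, A n))

/-- A (normalized) capacity on the field `𝒜`. -/
def IsCapacity (𝒜 : Set (Set Ω)) (φ : Set Ω → ℝ) : Prop :=
  φ ∅ = 0 ∧ φ Set.univ = 1 ∧ (∀ A ∈ 𝒜, 0 ≤ φ A ∧ φ A ≤ 1) ∧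
    ∀ A ∈ 𝒜, ∀ B ∈ 𝒜, A ⊆ B → φ A ≤ φ B

/-- Total monotonicity of a capacity `φ` on the field `𝒜`. -/
def TotallyMonotone (𝒜 : Set (Set Ω)) (φ : Set Ω → ℝ) : Prop :=
  ∀ n : ℕ, 2 ≤ n → ∀ A : Fin n → Set Ω, (∀ i, A i ∈ 𝒜) →
    ∑ s ∈ Finset.univ.powerset.filter (fun s : Finset (Fin n) => s.Nonempty),
      (-1 : ℝ) ^ (s.card - 1) * φ (⋂ i ∈ s, A i) ≤ φ (⋃ i, A i)

/-- Restriction of a conditional probability to the domain `𝒜 × ℬ⁰`, viewed as a point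
of the product space `ℝ^(𝒜 × ℬ⁰)`. -/
def restrictPairs (𝒜 ℬ : Set (Set Ω)) (Q : Set Ω → Set Ω → ℝ)
    (p : {p : Set Ω × Set Ω // p.1 ∈ 𝒜 ∧ p.2 ∈ ℬ ∧ p.2.Nonempty}) : ℝ :=
  Q p.val.1 p.val.2

/-- Restriction of a set function to the domain `𝒜`, viewed as a point of `ℝ^𝒜`. -/
def restrictDom (𝒜 : Set (Set Ω)) (μ : Set Ω → ℝ) (A : {A : Set Ω // A ∈ 𝒜}) : ℝ :=
  μ A.val

/-- The field of all unions of members of the partition `H`, i.e. `⟨ℒ⟩*`. -/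
def unionsOf {ι : Type*} (H : ι → Set Ω) : Set (Set Ω) :=
  {A | ∃ S : Set ι, A = ⋃ i ∈ S, H i}

/-- The set `𝒬^fd` of fully ℒ-disintegrable full conditional probabilities on `𝒜`
extending `{π, σ}`. -/
def QfdSet {ι : Type*} (𝒜 𝒜L : Set (Set Ω)) (H : ι → Set Ω)
    (π : Set Ω → ℝ) (σ : Set Ω → ι → ℝ) : Set (Set Ω → Set Ω → ℝ) :=
  {Q | IsFCP 𝒜 Q ∧ ExtendsPriorStrategy 𝒜 𝒜L H π σ Q ∧
    ∀ F ∈ 𝒜, ∀ K ∈ 𝒜L, K.Nonempty →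
      Q F K = lowerSInt H 𝒜L (fun i => σ F i) fun B => Q B K}

/-- The set `𝒬^fsc` of fully strongly ℒ-conglomerable full conditional probabilities
on `𝒜` extending `{π, σ}`. -/
def QfscSet {ι : Type*} (𝒜 𝒜L : Set (Set Ω)) (H : ι → Set Ω)
    (π : Set Ω → ℝ) (σ : Set Ω → ι → ℝ) : Set (Set Ω → Set Ω → ℝ) :=
  {Q | IsFCP 𝒜 Q ∧ ExtendsPriorStrategy 𝒜 𝒜L H π σ Q ∧
    ∀ F ∈ 𝒜, ∀ K ∈ 𝒜L, K.Nonempty → ∀ B ∈ 𝒜L, B.Nonempty → B ⊆ K →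
      Q B K * sInf {x | ∃ i, H i ⊆ B ∧ x = σ F i} ≤ Q (F ∩ B) K ∧
      Q (F ∩ B) K ≤ Q B K * sSup {x | ∃ i, H i ⊆ B ∧ x = σ F i}}

/-- The set `𝒫^sc` of strongly ℒ-conglomerable joint probabilities consistent with `{π, σ}`. -/
def PscSet {ι : Type*} (𝒜 𝒜L : Set (Set Ω)) (H : ι → Set Ω)
    (π : Set Ω → ℝ) (σ : Set Ω → ι → ℝ) : Set (Set Ω → ℝ) :=
  {μ | (∃ P ∈ FCPSet 𝒜 𝒜L H π σ, μ = fun F => P F Set.univ) ∧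
    ∀ F ∈ 𝒜, ∀ B ∈ 𝒜L, B.Nonempty →
      π B * sInf {x | ∃ i, H i ⊆ B ∧ x = σ F i} ≤ μ (F ∩ B) ∧
      μ (F ∩ B) ≤ π B * sSup {x | ∃ i, H i ⊆ B ∧ x = σ F i}}

/-- The set `𝒫^fd` of fully ℒ-disintegrable conditional probabilities on `𝒜 × 𝒜L⁰`
extending `{π, σ}`. -/
def PfdSet {ι : Type*} (𝒜 𝒜L : Set (Set Ω)) (H : ι → Set Ω)
    (π : Set Ω → ℝ) (σ : Set Ω → ι → ℝ) : Set (Set Ω → Set Ω → ℝ) :=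
  {P | (∀ E ∈ 𝒜, ∀ K ∈ 𝒜L, K.Nonempty → P E K = P (E ∩ K) K) ∧
    (∀ K ∈ 𝒜L, K.Nonempty → IsFAP 𝒜 fun E => P E K) ∧
    (∀ E ∈ 𝒜, ∀ F ∈ 𝒜, ∀ K ∈ 𝒜L, K.Nonempty → E ∩ K ∈ 𝒜L → (E ∩ K).Nonempty →
      P (E ∩ F) K = P E K * P F (E ∩ K)) ∧
    (∀ B ∈ 𝒜L, P B Set.univ = π B) ∧ (∀ F ∈ 𝒜, ∀ i, P F (H i) = σ F i) ∧
    ∀ F ∈ 𝒜, ∀ K ∈ 𝒜L, K.Nonempty →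
      P F K = lowerSInt H 𝒜L (fun i => σ F i) fun B => P B K}

/-- The Choquet integral `C∫ X dφ = ∫₀¹ φ₊((X ≥ t)) dt` of a `[0,1]`-valued `X : ℒ → ℝ`
with respect to a capacity `φ` on `𝒜L`, where `φ₊` is the inner extension of `φ`. -/
noncomputable def choquetInt {ι : Type*} (H : ι → Set Ω) (𝒜L : Set (Set Ω))
    (X : ι → ℝ) (φ : Set Ω → ℝ) : ℝ :=
  ∫ t in (0 : ℝ)..(1 : ℝ),
    sSup {y | ∃ B ∈ 𝒜L, B ⊆ (⋃ i ∈ {i | t ≤ X i}, H i) ∧ y = φ B}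

section Aux14

variable {Ω ι : Type*}

/-! ### Basic field and FAP lemmas -/

lemma SF.empty_mem {𝒜 : Set (Set Ω)} (h : IsSetField 𝒜) : (∅ : Set Ω) ∈ 𝒜 := by
  have := h.2.1 _ h.1
  simpa using this

lemma SF.inter_mem {𝒜 : Set (Set Ω)} (h : IsSetField 𝒜) {A B : Set Ω}
    (hA : A ∈ 𝒜) (hB : B ∈ 𝒜) : A ∩ B ∈ 𝒜 := by
  have := h.2.1 _ (h.2.2 _ (h.2.1 _ hA) _ (h.2.1 _ hB))
  simpa [Set.compl_union] using this

lemma FAP.mono_subset {𝒜 : Set (Set Ω)} {μ : Set Ω → ℝ} (hF : IsSetField 𝒜)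
    (hμ : IsFAP 𝒜 μ) {A B : Set Ω} (hA : A ∈ 𝒜) (hB : B ∈ 𝒜) (hAB : A ⊆ B) :
    μ A ≤ μ B := by
  have hd : B ∩ Aᶜ ∈ 𝒜 := SF.inter_mem hF hB (hF.2.1 _ hA)
  have hadd := hμ.2.2 _ hA _ hd (by
    exact Set.disjoint_left.2 fun x hx hx2 => hx2.2 hx)
  have hUn : A ∪ B ∩ Aᶜ = B := by
    ext x; constructor
    · rintro (h | h); exacts [hAB h, h.1]
    · intro h; by_cases hx : x ∈ A
      · exact Or.inl hx
      · exact Or.inr ⟨h, hx⟩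
  rw [hUn] at hadd
  have := (hμ.1 _ hd).1
  linarith

lemma FAP.empty {𝒜 : Set (Set Ω)} {μ : Set Ω → ℝ} (hF : IsSetField 𝒜)
    (hμ : IsFAP 𝒜 μ) : μ ∅ = 0 := by
  have hadd := hμ.2.2 _ (SF.empty_mem hF) _ hF.1 (by simp)
  simp only [Set.empty_union] at hadd
  linarith

lemma FAP.compl {𝒜 : Set (Set Ω)} {μ : Set Ω → ℝ} (hF : IsSetField 𝒜)
    (hμ : IsFAP 𝒜 μ) {A : Set Ω} (hA : A ∈ 𝒜) : μ Aᶜ = 1 - μ A := by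
  have hadd := hμ.2.2 _ hA _ (hF.2.1 _ hA) disjoint_compl_right
  rw [Set.union_compl_self, hμ.2.1] at hadd
  linarith

/-- On a field, if `μ T = 1` then `μ (S ∩ T) = μ S`. -/
lemma FAP.inter_of_one {𝒜 : Set (Set Ω)} {μ : Set Ω → ℝ} (hF : IsSetField 𝒜)
    (hμ : IsFAP 𝒜 μ) {S T : Set Ω} (hS : S ∈ 𝒜) (hT : T ∈ 𝒜) (h1 : μ T = 1) :
    μ (S ∩ T) = μ S := by
  have h2 : S ∩ Tᶜ ∈ 𝒜 := SF.inter_mem hF hS (hF.2.1 _ hT)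
  have hadd := hμ.2.2 _ (SF.inter_mem hF hS hT) _ h2 (by
    exact Set.disjoint_left.2 fun x hx hx2 => hx2.2 hx.2)
  have hUn : S ∩ T ∪ S ∩ Tᶜ = S := by
    ext x; constructor
    · rintro (h | h) <;> exact h.1
    · intro h; by_cases hx : x ∈ T
      · exact Or.inl ⟨h, hx⟩
      · exact Or.inr ⟨h, hx⟩
  rw [hUn] at hadd
  have h3 : μ (S ∩ Tᶜ) ≤ μ Tᶜ := FAP.mono_subset hF hμ h2 (hF.2.1 _ hT) Set.inter_subset_right
  have h4 : μ Tᶜ = 0 := by rw [FAP.compl hF hμ hT, h1]; ring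
  have h5 := (hμ.1 _ h2).1
  linarith

lemma SF.sUnion_mem {𝒜 : Set (Set Ω)} (hF : IsSetField 𝒜) :
    ∀ (T : Finset (Set Ω)), (↑T : Set (Set Ω)) ⊆ 𝒜 → ⋃₀ (↑T : Set (Set Ω)) ∈ 𝒜 := by
  intro T
  induction T using Finset.induction_on with
  | empty => intro _; simpa using SF.empty_mem hF
  | @insert A' T' h ih2 =>
    intro hsub
    rw [Finset.coe_insert, Set.sUnion_insert]
    exact hF.2.2 _ (hsub (by simp)) _ (ih2 fun x hx => hsub (by simp [hx]))

/-- Finite additivity over a pairwise disjoint finset, intersected with a set `B`. -/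
lemma FAP.sum_inter {𝒜 : Set (Set Ω)} {μ : Set Ω → ℝ} (hF : IsSetField 𝒜)
    (hμ : IsFAP 𝒜 μ) {B : Set Ω} (hB : B ∈ 𝒜) :
    ∀ (T : Finset (Set Ω)), (↑T : Set (Set Ω)) ⊆ 𝒜 →
      (∀ A ∈ T, ∀ A' ∈ T, A ≠ A' → Disjoint A A') →
      (∑ A ∈ T, μ (A ∩ B)) = μ (⋃₀ (↑T : Set (Set Ω)) ∩ B) := by
  intro T
  induction T using Finset.induction_on with
  | empty => intro _ _; simp [FAP.empty hF hμ]
  | @insert A T hA ih =>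
    intro hsub hdisj
    have hAm : A ∈ 𝒜 := hsub (by simp)
    have hTsub : (↑T : Set (Set Ω)) ⊆ 𝒜 := fun x hx => hsub (by simp [hx])
    have hTm : ⋃₀ (↑T : Set (Set Ω)) ∈ 𝒜 := SF.sUnion_mem hF T hTsub
    have hrec := ih hTsub (fun a ha a' ha' => hdisj a (by simp [ha]) a' (by simp [ha']))
    rw [Finset.sum_insert hA, hrec]
    have hd : Disjoint (A ∩ B) (⋃₀ (↑T : Set (Set Ω)) ∩ B) := by
      rw [Set.disjoint_left]
      rintro x ⟨hxA, -⟩ ⟨hxU, -⟩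
      obtain ⟨A', hA', hxA'⟩ := hxU
      have hne : A ≠ A' := fun h => hA (by simpa [← h] using hA')
      exact Set.disjoint_left.1
        (hdisj A (by simp) A' (by simp [Finset.mem_coe.1 hA']) hne) hxA hxA'
    have hadd := hμ.2.2 _ (SF.inter_mem hF hAm hB) _ (SF.inter_mem hF hTm hB) hd
    rw [← hadd]
    congr 1
    rw [Finset.coe_insert, Set.sUnion_insert, Set.union_inter_distrib_right]

/-- Restriction of an FAP to a subfield. -/
lemma FAP.restrict {𝒜 ℬ : Set (Set Ω)} {μ : Set Ω → ℝ} (hsub : ℬ ⊆ 𝒜)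
    (hℬ : IsSetField ℬ) (hμ : IsFAP 𝒜 μ) : IsFAP ℬ μ :=
  ⟨fun A hA => hμ.1 A (hsub hA), hμ.2.1,
    fun A hA B hB h => hμ.2.2 A (hsub hA) B (hsub hB) h⟩

/-! ### Atom lemmas -/

lemma atom_in_union {H : ι → Set Ω} (hH : IsPartition H) {S : Set ι} {j : ι}
    (h : H j ⊆ ⋃ i ∈ S, H i) : j ∈ S := by
  obtain ⟨x, hx⟩ := hH.1 j
  obtain ⟨i, hi, hxi⟩ := by simpa using h hx
  rcases eq_or_ne i j with rfl | hne
  · exact hi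
  · exact absurd (Set.disjoint_left.1 (hH.2.1 hne) hxi hx) (fun h => h)

lemma atom_subset_or_disjoint {H : ι → Set Ω} {𝒜L : Set (Set Ω)}
    (hH : IsPartition H) (h𝒜L : IsFieldOver H 𝒜L) {A : Set Ω} (hA : A ∈ 𝒜L) (i : ι) :
    H i ⊆ A ∨ H i ∩ A = ∅ := by
  obtain ⟨S, rfl⟩ := h𝒜L.2.2 A hA
  by_cases hi : i ∈ S
  · exact Or.inl (Set.subset_biUnion_of_mem hi)
  · right
    ext x
    simp only [Set.mem_inter_iff, Set.mem_iUnion, Set.mem_empty_iff_false, iff_false]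
    rintro ⟨hxi, j, hj, hxj⟩
    rcases eq_or_ne i j with rfl | hne
    · exact hi hj
    · exact Set.disjoint_left.1 (hH.2.1 hne) hxi hxj

lemma exists_atom_subset {H : ι → Set Ω} {𝒜L : Set (Set Ω)}
    (h𝒜L : IsFieldOver H 𝒜L) {A : Set Ω} (hA : A ∈ 𝒜L) (hne : A.Nonempty) :
    ∃ i, H i ⊆ A := by
  obtain ⟨S, rfl⟩ := h𝒜L.2.2 A hA
  obtain ⟨x, hx⟩ := hne
  obtain ⟨i, hi, -⟩ := by simpa using hx
  exact ⟨i, Set.subset_biUnion_of_mem hi⟩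

lemma subset_of_atoms {H : ι → Set Ω} {𝒜L : Set (Set Ω)}
    (h𝒜L : IsFieldOver H 𝒜L) {A B : Set Ω} (hA : A ∈ 𝒜L)
    (h : ∀ i, H i ⊆ A → H i ⊆ B) : A ⊆ B := by
  obtain ⟨S, rfl⟩ := h𝒜L.2.2 A hA
  intro x hx
  obtain ⟨i, hi, hxi⟩ := by simpa using hx
  exact h i (Set.subset_biUnion_of_mem hi) hxi

end Aux14
section Aux14b

variable {Ω ι : Type*}

/-! ### Lower/upper sums -/

/-- The set of values of `X` on atoms inside `A`. -/
def setOn (H : ι → Set Ω) (X : ι → ℝ) (A : Set Ω) : Set ℝ :=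
  {y | ∃ i, H i ⊆ A ∧ y = X i}

noncomputable def infOn (H : ι → Set Ω) (X : ι → ℝ) (A : Set Ω) : ℝ := sInf (setOn H X A)
noncomputable def supOn (H : ι → Set Ω) (X : ι → ℝ) (A : Set Ω) : ℝ := sSup (setOn H X A)

noncomputable def lowSum (H : ι → Set Ω) (X : ι → ℝ) (μ : Set Ω → ℝ)
    (T : Finset (Set Ω)) : ℝ := ∑ A ∈ T, infOn H X A * μ A

noncomputable def upSum (H : ι → Set Ω) (X : ι → ℝ) (μ : Set Ω → ℝ)
    (T : Finset (Set Ω)) : ℝ := ∑ A ∈ T, supOn H X A * μ A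

lemma lowerSInt_def (H : ι → Set Ω) (𝒜L : Set (Set Ω)) (X : ι → ℝ) (μ : Set Ω → ℝ) :
    lowerSInt H 𝒜L X μ =
      sSup {x | ∃ T : Finset (Set Ω), IsFinPart 𝒜L T ∧ x = lowSum H X μ T} := rfl

lemma upperSInt_def (H : ι → Set Ω) (𝒜L : Set (Set Ω)) (X : ι → ℝ) (μ : Set Ω → ℝ) :
    upperSInt H 𝒜L X μ =
      sInf {x | ∃ T : Finset (Set Ω), IsFinPart 𝒜L T ∧ x = upSum H X μ T} := rfl

variable {H : ι → Set Ω} {𝒜L : Set (Set Ω)} {X : ι → ℝ} {μ : Set Ω → ℝ}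

lemma setOn_nonempty (h𝒜L : IsFieldOver H 𝒜L) {A : Set Ω} (hA : A ∈ 𝒜L)
    (hne : A.Nonempty) : (setOn H X A).Nonempty := by
  obtain ⟨i, hi⟩ := exists_atom_subset h𝒜L hA hne
  exact ⟨X i, i, hi, rfl⟩

lemma setOn_bddBelow (hX : ∀ i, 0 ≤ X i ∧ X i ≤ 1) (A : Set Ω) :
    BddBelow (setOn H X A) := ⟨0, by rintro y ⟨i, -, rfl⟩; exact (hX i).1⟩

lemma setOn_bddAbove (hX : ∀ i, 0 ≤ X i ∧ X i ≤ 1) (A : Set Ω) :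
    BddAbove (setOn H X A) := ⟨1, by rintro y ⟨i, -, rfl⟩; exact (hX i).2⟩

lemma infOn_nonneg (hX : ∀ i, 0 ≤ X i ∧ X i ≤ 1) (A : Set Ω) :
    0 ≤ infOn H X A := by
  rcases Set.eq_empty_or_nonempty (setOn H X A) with h | h
  · simp [infOn, h]
  · exact le_csInf h (by rintro y ⟨i, -, rfl⟩; exact (hX i).1)

lemma supOn_le_one (hX : ∀ i, 0 ≤ X i ∧ X i ≤ 1) (A : Set Ω) :
    supOn H X A ≤ 1 := by
  rcases Set.eq_empty_or_nonempty (setOn H X A) with h | h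
  · simp [supOn, h]
  · exact csSup_le h (by rintro y ⟨i, -, rfl⟩; exact (hX i).2)

lemma infOn_le_supOn (h𝒜L : IsFieldOver H 𝒜L) (hX : ∀ i, 0 ≤ X i ∧ X i ≤ 1)
    {A : Set Ω} (hA : A ∈ 𝒜L) (hne : A.Nonempty) : infOn H X A ≤ supOn H X A := by
  obtain ⟨y, hy⟩ := setOn_nonempty (X := X) h𝒜L hA hne
  exact le_trans (csInf_le (setOn_bddBelow hX A) hy) (le_csSup (setOn_bddAbove hX A) hy)

lemma infOn_le_one (h𝒜L : IsFieldOver H 𝒜L) (hX : ∀ i, 0 ≤ X i ∧ X i ≤ 1)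
    {A : Set Ω} (hA : A ∈ 𝒜L) (hne : A.Nonempty) : infOn H X A ≤ 1 :=
  le_trans (infOn_le_supOn h𝒜L hX hA hne) (supOn_le_one hX A)

lemma supOn_nonneg (h𝒜L : IsFieldOver H 𝒜L) (hX : ∀ i, 0 ≤ X i ∧ X i ≤ 1)
    {A : Set Ω} (hA : A ∈ 𝒜L) (hne : A.Nonempty) : 0 ≤ supOn H X A :=
  le_trans (infOn_nonneg hX A) (infOn_le_supOn h𝒜L hX hA hne)

lemma infOn_mono (hX : ∀ i, 0 ≤ X i ∧ X i ≤ 1) (h𝒜L : IsFieldOver H 𝒜L)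
    {A B : Set Ω} (hB : B ∈ 𝒜L) (hBA : B ⊆ A) (hne : B.Nonempty) :
    infOn H X A ≤ infOn H X B := by
  apply le_csInf (setOn_nonempty h𝒜L hB hne)
  rintro y ⟨i, hi, rfl⟩
  exact csInf_le (setOn_bddBelow hX A) ⟨i, hi.trans hBA, rfl⟩

lemma supOn_mono (hX : ∀ i, 0 ≤ X i ∧ X i ≤ 1) (h𝒜L : IsFieldOver H 𝒜L)
    {A B : Set Ω} (hB : B ∈ 𝒜L) (hBA : B ⊆ A) (hne : B.Nonempty) :
    supOn H X B ≤ supOn H X A := by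
  apply csSup_le (setOn_nonempty h𝒜L hB hne)
  rintro y ⟨i, hi, rfl⟩
  exact le_csSup (setOn_bddAbove hX A) ⟨i, hi.trans hBA, rfl⟩

/-- Sum of the measure over a finite partition intersected with `B` equals `μ B`. -/
lemma sum_inter_part (h𝒜L : IsFieldOver H 𝒜L) (hμ : IsFAP 𝒜L μ)
    {T : Finset (Set Ω)} (hT : IsFinPart 𝒜L T) {B : Set Ω} (hB : B ∈ 𝒜L) :
    ∑ A ∈ T, μ (A ∩ B) = μ B := by
  rw [FAP.sum_inter h𝒜L.1 hμ hB T hT.1 hT.2.2.1, hT.2.2.2]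
  simp

lemma sum_part_eq_one (h𝒜L : IsFieldOver H 𝒜L) (hμ : IsFAP 𝒜L μ)
    {T : Finset (Set Ω)} (hT : IsFinPart 𝒜L T) : ∑ A ∈ T, μ A = 1 := by
  have := sum_inter_part h𝒜L hμ hT h𝒜L.1.1
  simpa [hμ.2.1] using this

/-! ### Refinement -/

noncomputable def refineP (T T' : Finset (Set Ω)) : Finset (Set Ω) :=
  ((T ×ˢ T').image fun p => p.1 ∩ p.2).filter fun A => A.Nonempty

lemma mem_refineP {T T' C} : C ∈ refineP (Ω := Ω) T T' ↔
    (∃ A ∈ T, ∃ B ∈ T', C = A ∩ B) ∧ C.Nonempty := by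
  simp only [refineP, Finset.mem_filter, Finset.mem_image, Finset.mem_product]
  constructor
  · rintro ⟨⟨⟨A, B⟩, ⟨hA, hB⟩, rfl⟩, hne⟩
    exact ⟨⟨A, hA, B, hB, rfl⟩, hne⟩
  · rintro ⟨⟨A, hA, B, hB, rfl⟩, hne⟩
    exact ⟨⟨⟨A, B⟩, ⟨hA, hB⟩, rfl⟩, hne⟩

lemma refineP_isFinPart {T T' : Finset (Set Ω)}
    (hT : IsFinPart 𝒜L T) (hT' : IsFinPart 𝒜L T') (h𝒜L : IsFieldOver H 𝒜L) :
    IsFinPart 𝒜L (refineP T T') := by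
  refine ⟨?_, ?_, ?_, ?_⟩
  · intro C hC
    obtain ⟨⟨A, hA, B, hB, rfl⟩, -⟩ := mem_refineP.1 hC
    exact SF.inter_mem h𝒜L.1 (hT.1 hA) (hT'.1 hB)
  · intro C hC; exact (mem_refineP.1 hC).2
  · intro C hC D hD hne
    obtain ⟨⟨A, hA, B, hB, rfl⟩, -⟩ := mem_refineP.1 hC
    obtain ⟨⟨A', hA', B', hB', rfl⟩, -⟩ := mem_refineP.1 hD
    rcases eq_or_ne A A' with rfl | hAA
    · rcases eq_or_ne B B' with rfl | hBB
      · exact absurd rfl hne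
      · exact Set.disjoint_of_subset Set.inter_subset_right Set.inter_subset_right
          (hT'.2.2.1 B hB B' hB' hBB)
    · exact Set.disjoint_of_subset Set.inter_subset_left Set.inter_subset_left
        (hT.2.2.1 A hA A' hA' hAA)
  · apply Set.eq_univ_of_forall
    intro x
    have hx1 : x ∈ ⋃₀ (↑T : Set (Set Ω)) := by rw [hT.2.2.2]; trivial
    have hx2 : x ∈ ⋃₀ (↑T' : Set (Set Ω)) := by rw [hT'.2.2.2]; trivial
    obtain ⟨A, hA, hxA⟩ := hx1
    obtain ⟨B, hB, hxB⟩ := hx2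
    exact ⟨A ∩ B, mem_refineP.2 ⟨⟨A, Finset.mem_coe.1 hA, B, Finset.mem_coe.1 hB, rfl⟩,
      ⟨x, hxA, hxB⟩⟩, hxA, hxB⟩

lemma sum_refineP {T T' : Finset (Set Ω)}
    (hT : IsFinPart 𝒜L T) (hT' : IsFinPart 𝒜L T') (f : Set Ω → ℝ)
    (hf : ∀ A ∈ T, ∀ B ∈ T', A ∩ B = ∅ → f (A ∩ B) = 0) :
    ∑ C ∈ refineP T T', f C = ∑ A ∈ T, ∑ B ∈ T', f (A ∩ B) := by
  have himg : refineP T T' =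
      ((T ×ˢ T').filter fun p => (p.1 ∩ p.2).Nonempty).image fun p => p.1 ∩ p.2 := by
    ext C
    rw [mem_refineP]
    simp only [Finset.mem_image, Finset.mem_filter, Finset.mem_product]
    constructor
    · rintro ⟨⟨A, hA, B, hB, rfl⟩, hne⟩; exact ⟨⟨A, B⟩, ⟨⟨hA, hB⟩, hne⟩, rfl⟩
    · rintro ⟨⟨A, B⟩, ⟨⟨hA, hB⟩, hne⟩, rfl⟩; exact ⟨⟨A, hA, B, hB, rfl⟩, hne⟩
  rw [himg, Finset.sum_image ?hinj]
  case hinj =>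
    rintro ⟨A, B⟩ hp ⟨A', B'⟩ hq heq
    simp only [Finset.mem_coe, Finset.mem_filter, Finset.mem_product] at hp hq
    obtain ⟨x, hx⟩ := hp.2
    have hx' : x ∈ A' ∩ B' := (show A ∩ B = A' ∩ B' from heq) ▸ hx
    have hA : A = A' := by
      by_contra hne
      exact Set.disjoint_left.1 (hT.2.2.1 A hp.1.1 A' hq.1.1 hne) hx.1 hx'.1
    have hB : B = B' := by
      by_contra hne
      exact Set.disjoint_left.1 (hT'.2.2.1 B hp.1.2 B' hq.1.2 hne) hx.2 hx'.2
    simp [hA, hB]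
  rw [Finset.sum_filter, Finset.sum_product]
  refine Finset.sum_congr rfl fun A hA => Finset.sum_congr rfl fun B hB => ?_
  by_cases hne : (A ∩ B).Nonempty
  · simp [hne]
  · rw [if_neg hne, hf A hA B hB (Set.not_nonempty_iff_eq_empty.1 hne)]

lemma lowSum_le_refine (hH : IsPartition H) (h𝒜L : IsFieldOver H 𝒜L)
    (hμ : IsFAP 𝒜L μ) (hX : ∀ i, 0 ≤ X i ∧ X i ≤ 1)
    {T T' : Finset (Set Ω)} (hT : IsFinPart 𝒜L T) (hT' : IsFinPart 𝒜L T') :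
    lowSum H X μ T ≤ lowSum H X μ (refineP T T') := by
  unfold lowSum
  rw [sum_refineP hT hT' _ (fun A hA B hB h => by
    rw [h, FAP.empty h𝒜L.1 hμ, mul_zero])]
  apply Finset.sum_le_sum
  intro A hA
  have hAm := hT.1 (Finset.mem_coe.2 hA)
  have : μ A = ∑ B ∈ T', μ (A ∩ B) := by
    rw [← sum_inter_part h𝒜L hμ hT' hAm]
    exact Finset.sum_congr rfl fun B _ => by rw [Set.inter_comm]
  rw [this, Finset.mul_sum]
  apply Finset.sum_le_sum
  intro B hB
  have hABm : A ∩ B ∈ 𝒜L := SF.inter_mem h𝒜L.1 hAm (hT'.1 (Finset.mem_coe.2 hB))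
  rcases Set.eq_empty_or_nonempty (A ∩ B) with h | h
  · rw [h, FAP.empty h𝒜L.1 hμ, mul_zero, mul_zero]
  · exact mul_le_mul_of_nonneg_right
      (infOn_mono hX h𝒜L hABm Set.inter_subset_left h) ((hμ.1 _ hABm).1)

lemma refine_le_upSum (hH : IsPartition H) (h𝒜L : IsFieldOver H 𝒜L)
    (hμ : IsFAP 𝒜L μ) (hX : ∀ i, 0 ≤ X i ∧ X i ≤ 1)
    {T T' : Finset (Set Ω)} (hT : IsFinPart 𝒜L T) (hT' : IsFinPart 𝒜L T') :
    upSum H X μ (refineP T T') ≤ upSum H X μ T' := by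
  unfold upSum
  rw [sum_refineP hT hT' _ (fun A hA B hB h => by
    rw [h, FAP.empty h𝒜L.1 hμ, mul_zero])]
  rw [Finset.sum_comm]
  apply Finset.sum_le_sum
  intro B hB
  have hBm := hT'.1 (Finset.mem_coe.2 hB)
  have : μ B = ∑ A ∈ T, μ (A ∩ B) := (sum_inter_part h𝒜L hμ hT hBm).symm
  rw [this, Finset.mul_sum]
  apply Finset.sum_le_sum
  intro A hA
  have hABm : A ∩ B ∈ 𝒜L := SF.inter_mem h𝒜L.1 (hT.1 (Finset.mem_coe.2 hA)) hBm
  rcases Set.eq_empty_or_nonempty (A ∩ B) with h | h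
  · rw [h, FAP.empty h𝒜L.1 hμ, mul_zero, mul_zero]
  · exact mul_le_mul_of_nonneg_right
      (supOn_mono hX h𝒜L hABm Set.inter_subset_right h) ((hμ.1 _ hABm).1)

lemma lowSum_le_upSum_self (h𝒜L : IsFieldOver H 𝒜L) (hμ : IsFAP 𝒜L μ)
    (hX : ∀ i, 0 ≤ X i ∧ X i ≤ 1) {T : Finset (Set Ω)} (hT : IsFinPart 𝒜L T) :
    lowSum H X μ T ≤ upSum H X μ T := by
  apply Finset.sum_le_sum
  intro A hA
  have hAm := hT.1 (Finset.mem_coe.2 hA)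
  exact mul_le_mul_of_nonneg_right
    (infOn_le_supOn h𝒜L hX hAm (hT.2.1 A hA)) ((hμ.1 _ hAm).1)

lemma lowSum_le_upSum (hH : IsPartition H) (h𝒜L : IsFieldOver H 𝒜L)
    (hμ : IsFAP 𝒜L μ) (hX : ∀ i, 0 ≤ X i ∧ X i ≤ 1)
    {T T' : Finset (Set Ω)} (hT : IsFinPart 𝒜L T) (hT' : IsFinPart 𝒜L T') :
    lowSum H X μ T ≤ upSum H X μ T' :=
  le_trans (lowSum_le_refine hH h𝒜L hμ hX hT hT')
    (le_trans (lowSum_le_upSum_self h𝒜L hμ hX (refineP_isFinPart hT hT' h𝒜L))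
      (refine_le_upSum hH h𝒜L hμ hX hT hT'))

lemma lowSum_nonneg (hμ : IsFAP 𝒜L μ) (hX : ∀ i, 0 ≤ X i ∧ X i ≤ 1)
    {T : Finset (Set Ω)} (hT : IsFinPart 𝒜L T) : 0 ≤ lowSum H X μ T :=
  Finset.sum_nonneg fun A hA =>
    mul_nonneg (infOn_nonneg hX A) ((hμ.1 _ (hT.1 (Finset.mem_coe.2 hA))).1)

lemma upSum_le_one (h𝒜L : IsFieldOver H 𝒜L) (hμ : IsFAP 𝒜L μ)
    (hX : ∀ i, 0 ≤ X i ∧ X i ≤ 1) {T : Finset (Set Ω)} (hT : IsFinPart 𝒜L T) :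
    upSum H X μ T ≤ 1 := by
  calc upSum H X μ T ≤ ∑ A ∈ T, μ A := Finset.sum_le_sum fun A hA => by
        have hAm := hT.1 (Finset.mem_coe.2 hA)
        calc supOn H X A * μ A ≤ 1 * μ A :=
              mul_le_mul_of_nonneg_right (supOn_le_one hX A) ((hμ.1 _ hAm).1)
          _ = μ A := one_mul _
    _ = 1 := sum_part_eq_one h𝒜L hμ hT

lemma trivPart_isFinPart (hΩ : (Set.univ : Set Ω).Nonempty) (h𝒜L : IsFieldOver H 𝒜L) :
    IsFinPart 𝒜L ({Set.univ} : Finset (Set Ω)) := by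
  refine ⟨by simp [h𝒜L.1.1], by simpa using hΩ, by simp, by simp⟩

end Aux14b
section Aux14c

variable {Ω ι : Type*}

def LSet (H : ι → Set Ω) (𝒜L : Set (Set Ω)) (X : ι → ℝ) (μ : Set Ω → ℝ) : Set ℝ :=
  {x | ∃ T : Finset (Set Ω), IsFinPart 𝒜L T ∧ x = lowSum H X μ T}

def USet (H : ι → Set Ω) (𝒜L : Set (Set Ω)) (X : ι → ℝ) (μ : Set Ω → ℝ) : Set ℝ :=
  {x | ∃ T : Finset (Set Ω), IsFinPart 𝒜L T ∧ x = upSum H X μ T}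

lemma lowerSInt_eq_sSup (H : ι → Set Ω) (𝒜L : Set (Set Ω)) (X : ι → ℝ) (μ : Set Ω → ℝ) :
    lowerSInt H 𝒜L X μ = sSup (LSet H 𝒜L X μ) := rfl

lemma upperSInt_eq_sInf (H : ι → Set Ω) (𝒜L : Set (Set Ω)) (X : ι → ℝ) (μ : Set Ω → ℝ) :
    upperSInt H 𝒜L X μ = sInf (USet H 𝒜L X μ) := rfl

variable {H : ι → Set Ω} {𝒜L : Set (Set Ω)} {X : ι → ℝ} {μ : Set Ω → ℝ}

lemma LSet_nonempty (hΩ : (Set.univ : Set Ω).Nonempty) (h𝒜L : IsFieldOver H 𝒜L) :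
    (LSet H 𝒜L X μ).Nonempty :=
  ⟨_, {Set.univ}, trivPart_isFinPart hΩ h𝒜L, rfl⟩

lemma USet_nonempty (hΩ : (Set.univ : Set Ω).Nonempty) (h𝒜L : IsFieldOver H 𝒜L) :
    (USet H 𝒜L X μ).Nonempty :=
  ⟨_, {Set.univ}, trivPart_isFinPart hΩ h𝒜L, rfl⟩

lemma LSet_bddAbove (hΩ : (Set.univ : Set Ω).Nonempty) (hH : IsPartition H)
    (h𝒜L : IsFieldOver H 𝒜L) (hμ : IsFAP 𝒜L μ) (hX : ∀ i, 0 ≤ X i ∧ X i ≤ 1) :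
    BddAbove (LSet H 𝒜L X μ) := by
  refine ⟨1, ?_⟩
  rintro x ⟨T, hT, rfl⟩
  exact le_trans (lowSum_le_upSum hH h𝒜L hμ hX hT (trivPart_isFinPart hΩ h𝒜L))
    (upSum_le_one h𝒜L hμ hX (trivPart_isFinPart hΩ h𝒜L))

lemma USet_bddBelow (h𝒜L : IsFieldOver H 𝒜L) (hμ : IsFAP 𝒜L μ)
    (hX : ∀ i, 0 ≤ X i ∧ X i ≤ 1) : BddBelow (USet H 𝒜L X μ) := by
  refine ⟨0, ?_⟩
  rintro x ⟨T, hT, rfl⟩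
  exact Finset.sum_nonneg fun A hA =>
    mul_nonneg (supOn_nonneg h𝒜L hX (hT.1 (Finset.mem_coe.2 hA)) (hT.2.1 A hA))
      ((hμ.1 _ (hT.1 (Finset.mem_coe.2 hA))).1)

lemma lowSum_le_lowerSInt (hΩ : (Set.univ : Set Ω).Nonempty) (hH : IsPartition H)
    (h𝒜L : IsFieldOver H 𝒜L) (hμ : IsFAP 𝒜L μ) (hX : ∀ i, 0 ≤ X i ∧ X i ≤ 1)
    {T : Finset (Set Ω)} (hT : IsFinPart 𝒜L T) :
    lowSum H X μ T ≤ lowerSInt H 𝒜L X μ :=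
  le_csSup (LSet_bddAbove hΩ hH h𝒜L hμ hX) ⟨T, hT, rfl⟩

lemma lowerSInt_le_of_forall (hΩ : (Set.univ : Set Ω).Nonempty)
    (h𝒜L : IsFieldOver H 𝒜L) {c : ℝ}
    (h : ∀ T : Finset (Set Ω), IsFinPart 𝒜L T → lowSum H X μ T ≤ c) :
    lowerSInt H 𝒜L X μ ≤ c :=
  csSup_le (LSet_nonempty hΩ h𝒜L) (by rintro x ⟨T, hT, rfl⟩; exact h T hT)

lemma upperSInt_le_upSum (h𝒜L : IsFieldOver H 𝒜L) (hμ : IsFAP 𝒜L μ)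
    (hX : ∀ i, 0 ≤ X i ∧ X i ≤ 1) {T : Finset (Set Ω)} (hT : IsFinPart 𝒜L T) :
    upperSInt H 𝒜L X μ ≤ upSum H X μ T :=
  csInf_le (USet_bddBelow h𝒜L hμ hX) ⟨T, hT, rfl⟩

lemma lowerSInt_nonneg (hΩ : (Set.univ : Set Ω).Nonempty) (hH : IsPartition H)
    (h𝒜L : IsFieldOver H 𝒜L) (hμ : IsFAP 𝒜L μ) (hX : ∀ i, 0 ≤ X i ∧ X i ≤ 1) :
    0 ≤ lowerSInt H 𝒜L X μ :=
  le_trans (lowSum_nonneg hμ hX (trivPart_isFinPart hΩ h𝒜L))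
    (lowSum_le_lowerSInt hΩ hH h𝒜L hμ hX (trivPart_isFinPart hΩ h𝒜L))

lemma lowerSInt_le_one (hΩ : (Set.univ : Set Ω).Nonempty) (hH : IsPartition H)
    (h𝒜L : IsFieldOver H 𝒜L) (hμ : IsFAP 𝒜L μ) (hX : ∀ i, 0 ≤ X i ∧ X i ≤ 1) :
    lowerSInt H 𝒜L X μ ≤ 1 :=
  lowerSInt_le_of_forall hΩ h𝒜L fun T hT =>
    le_trans (lowSum_le_upSum hH h𝒜L hμ hX hT (trivPart_isFinPart hΩ h𝒜L))
      (upSum_le_one h𝒜L hμ hX (trivPart_isFinPart hΩ h𝒜L))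

lemma lowerSInt_le_upperSInt (hΩ : (Set.univ : Set Ω).Nonempty) (hH : IsPartition H)
    (h𝒜L : IsFieldOver H 𝒜L) (hμ : IsFAP 𝒜L μ) (hX : ∀ i, 0 ≤ X i ∧ X i ≤ 1) :
    lowerSInt H 𝒜L X μ ≤ upperSInt H 𝒜L X μ :=
  lowerSInt_le_of_forall hΩ h𝒜L fun T hT =>
    le_csInf (USet_nonempty hΩ h𝒜L)
      (by rintro x ⟨T', hT', rfl⟩; exact lowSum_le_upSum hH h𝒜L hμ hX hT hT')

/-- The integral depends on `μ` only through its values on `𝒜L`. -/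
lemma lowerSInt_congr_meas {μ' : Set Ω → ℝ} (h : ∀ B ∈ 𝒜L, μ B = μ' B) :
    lowerSInt H 𝒜L X μ = lowerSInt H 𝒜L X μ' := by
  rw [lowerSInt_eq_sSup, lowerSInt_eq_sSup]
  congr 1
  ext x
  constructor <;> rintro ⟨T, hT, rfl⟩ <;> refine ⟨T, hT, Finset.sum_congr rfl fun A hA => ?_⟩
  · rw [h A (hT.1 (Finset.mem_coe.2 hA))]
  · rw [h A (hT.1 (Finset.mem_coe.2 hA))]

/-- The integral of a constant function. -/
lemma lowerSInt_const (hΩ : (Set.univ : Set Ω).Nonempty) (h𝒜L : IsFieldOver H 𝒜L)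
    (hμ : IsFAP 𝒜L μ) {c : ℝ} (hc : ∀ i, X i = c) : lowerSInt H 𝒜L X μ = c := by
  rw [lowerSInt_eq_sSup]
  have hls : ∀ T : Finset (Set Ω), IsFinPart 𝒜L T → lowSum H X μ T = c := by
    intro T hT
    have : ∀ A ∈ T, infOn H X A * μ A = c * μ A := by
      intro A hA
      have hAm := hT.1 (Finset.mem_coe.2 hA)
      have hAne := hT.2.1 A hA
      have hset : setOn H X A = {c} := by
        ext y
        constructor
        · rintro ⟨i, -, rfl⟩; exact hc i
        · rintro rfl
          obtain ⟨i, hi⟩ := exists_atom_subset h𝒜L hAm hAne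
          exact ⟨i, hi, (hc i).symm⟩
      rw [infOn, hset, csInf_singleton]
    rw [lowSum, Finset.sum_congr rfl this, ← Finset.mul_sum,
      sum_part_eq_one h𝒜L hμ hT, mul_one]
  have : LSet H 𝒜L X μ = {c} := by
    ext x
    constructor
    · rintro ⟨T, hT, rfl⟩; exact hls T hT
    · rintro rfl
      exact ⟨{Set.univ}, trivPart_isFinPart hΩ h𝒜L,
        (hls _ (trivPart_isFinPart hΩ h𝒜L)).symm⟩
  rw [show LSet H 𝒜L X μ = {c} from this, csSup_singleton]

/-! ### The two–element partition `{K, Kᶜ}` -/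

noncomputable def pairPart (K : Set Ω) : Finset (Set Ω) :=
  ({K, Kᶜ} : Finset (Set Ω)).filter fun A => A.Nonempty

lemma pairPart_isFinPart (h𝒜L : IsFieldOver H 𝒜L) {K : Set Ω} (hK : K ∈ 𝒜L)
    (hKne : K.Nonempty) : IsFinPart 𝒜L (pairPart K) := by
  refine ⟨?_, ?_, ?_, ?_⟩
  · intro A hA
    have := Finset.mem_filter.1 (Finset.mem_coe.1 hA)
    rcases Finset.mem_insert.1 this.1 with rfl | h
    · exact hK
    · rw [Finset.mem_singleton.1 h]; exact h𝒜L.1.2.1 _ hK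
  · intro A hA; exact (Finset.mem_filter.1 hA).2
  · intro A hA B hB hne
    have hA' := Finset.mem_filter.1 hA
    have hB' := Finset.mem_filter.1 hB
    rcases Finset.mem_insert.1 hA'.1 with rfl | h1 <;>
      rcases Finset.mem_insert.1 hB'.1 with rfl | h2
    · exact absurd rfl hne
    · rw [Finset.mem_singleton.1 h2]; exact disjoint_compl_right
    · rw [Finset.mem_singleton.1 h1]; exact disjoint_compl_left
    · exact absurd ((Finset.mem_singleton.1 h1).trans (Finset.mem_singleton.1 h2).symm) hne
  · apply Set.eq_univ_of_forall
    intro x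
    by_cases hx : x ∈ K
    · exact ⟨K, Finset.mem_coe.2 (Finset.mem_filter.2 ⟨by simp, hKne⟩), hx⟩
    · exact ⟨Kᶜ, Finset.mem_coe.2 (Finset.mem_filter.2 ⟨by simp, ⟨x, hx⟩⟩), hx⟩

lemma mem_pairPart {K C : Set Ω} (h : C ∈ pairPart K) : (C = K ∨ C = Kᶜ) ∧ C.Nonempty := by
  have := Finset.mem_filter.1 h
  refine ⟨?_, this.2⟩
  rcases Finset.mem_insert.1 this.1 with rfl | h1
  · exact Or.inl rfl
  · exact Or.inr (Finset.mem_singleton.1 h1)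

lemma refine_pair_subset {T : Finset (Set Ω)} {K C : Set Ω}
    (hC : C ∈ refineP T (pairPart K)) : C ⊆ K ∨ C ⊆ Kᶜ := by
  obtain ⟨⟨A, hA, B, hB, rfl⟩, -⟩ := mem_refineP.1 hC
  rcases (mem_pairPart hB).1 with rfl | rfl
  · exact Or.inl Set.inter_subset_right
  · exact Or.inr Set.inter_subset_right

/-- Two integrands agreeing on atoms inside `K` (where `μ Kᶜ = 0`) have the same
lower Stieltjes integral. -/
lemma lowerSInt_congr_null (hΩ : (Set.univ : Set Ω).Nonempty) (hH : IsPartition H)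
    (h𝒜L : IsFieldOver H 𝒜L) (hμ : IsFAP 𝒜L μ) {K : Set Ω} (hK : K ∈ 𝒜L)
    (hKne : K.Nonempty) (hK0 : μ Kᶜ = 0) {X' : ι → ℝ}
    (hX : ∀ i, 0 ≤ X i ∧ X i ≤ 1) (hX' : ∀ i, 0 ≤ X' i ∧ X' i ≤ 1)
    (hagree : ∀ i, H i ⊆ K → X i = X' i) :
    lowerSInt H 𝒜L X μ = lowerSInt H 𝒜L X' μ := by
  have key : ∀ (Y Y' : ι → ℝ), (∀ i, 0 ≤ Y i ∧ Y i ≤ 1) → (∀ i, 0 ≤ Y' i ∧ Y' i ≤ 1) →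
      (∀ i, H i ⊆ K → Y i = Y' i) → lowerSInt H 𝒜L Y μ ≤ lowerSInt H 𝒜L Y' μ := by
    intro Y Y' hY hY' hag
    apply lowerSInt_le_of_forall hΩ h𝒜L
    intro T hT
    set R := refineP T (pairPart K) with hR
    have hRpart : IsFinPart 𝒜L R :=
      refineP_isFinPart hT (pairPart_isFinPart h𝒜L hK hKne) h𝒜L
    have h1 : lowSum H Y μ T ≤ lowSum H Y μ R :=
      lowSum_le_refine hH h𝒜L hμ hY hT (pairPart_isFinPart h𝒜L hK hKne)
    have h2 : lowSum H Y μ R = lowSum H Y' μ R := by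
      apply Finset.sum_congr rfl
      intro C hC
      rcases refine_pair_subset (hR ▸ hC) with hsub | hsub
      · have : setOn H Y C = setOn H Y' C := by
          ext y
          constructor
          · rintro ⟨i, hi, rfl⟩; exact ⟨i, hi, hag i (hi.trans hsub)⟩
          · rintro ⟨i, hi, rfl⟩; exact ⟨i, hi, (hag i (hi.trans hsub)).symm⟩
        rw [infOn, infOn, this]
      · have hCm := hRpart.1 (Finset.mem_coe.2 hC)
        have hμC : μ C = 0 := le_antisymm
          (hK0 ▸ FAP.mono_subset h𝒜L.1 hμ hCm (h𝒜L.1.2.1 _ hK) hsub) ((hμ.1 _ hCm).1)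
        rw [hμC, mul_zero, mul_zero]
    rw [h2] at h1
    exact le_trans h1 (lowSum_le_lowerSInt hΩ hH h𝒜L hμ hY' hRpart)
  exact le_antisymm (key X X' hX hX' hagree)
    (key X' X hX' hX fun i hi => (hagree i hi).symm)

/-- The lower Stieltjes integral of (a function acting as) the indicator of `B ∈ 𝒜L`. -/
lemma lowerSInt_indicator (hΩ : (Set.univ : Set Ω).Nonempty) (hH : IsPartition H)
    (h𝒜L : IsFieldOver H 𝒜L) (hμ : IsFAP 𝒜L μ) {B : Set Ω} (hB : B ∈ 𝒜L)
    (hX : ∀ i, 0 ≤ X i ∧ X i ≤ 1)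
    (hind1 : ∀ i, H i ⊆ B → X i = 1) (hind0 : ∀ i, H i ∩ B = ∅ → X i = 0) :
    lowerSInt H 𝒜L X μ = μ B := by
  apply le_antisymm
  · apply lowerSInt_le_of_forall hΩ h𝒜L
    intro T hT
    have key : ∀ A ∈ T, infOn H X A * μ A ≤ μ (A ∩ B) := by
      intro A hA
      have hAm := hT.1 (Finset.mem_coe.2 hA)
      have hABm : A ∩ B ∈ 𝒜L := SF.inter_mem h𝒜L.1 hAm hB
      by_cases hcase : ∃ i, H i ⊆ A ∧ H i ∩ B = ∅
      · obtain ⟨i, hiA, hiB⟩ := hcase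
        have h0 : infOn H X A ≤ 0 := by
          have := csInf_le (setOn_bddBelow hX A) (⟨i, hiA, rfl⟩ : X i ∈ setOn H X A)
          rw [hind0 i hiB] at this
          exact this
        exact le_trans (mul_nonpos_of_nonpos_of_nonneg h0 ((hμ.1 _ hAm).1))
          ((hμ.1 _ hABm).1)
      · push_neg at hcase
        have hsub : A ⊆ B := by
          apply subset_of_atoms h𝒜L hAm
          intro i hiA
          rcases atom_subset_or_disjoint hH h𝒜L hB i with h | h
          · exact h
          · exact absurd (hcase i hiA) (by rw [h]; exact Set.not_nonempty_empty)
        have : A ∩ B = A := Set.inter_eq_self_of_subset_left hsub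
        rw [this]
        calc infOn H X A * μ A ≤ 1 * μ A := mul_le_mul_of_nonneg_right
              (infOn_le_one h𝒜L hX hAm (hT.2.1 A hA)) ((hμ.1 _ hAm).1)
          _ = μ A := one_mul _
    calc lowSum H X μ T ≤ ∑ A ∈ T, μ (A ∩ B) := Finset.sum_le_sum key
      _ = μ B := sum_inter_part h𝒜L hμ hT hB
  · rcases Set.eq_empty_or_nonempty B with rfl | hBne
    · rw [FAP.empty h𝒜L.1 hμ]
      exact lowerSInt_nonneg hΩ hH h𝒜L hμ hX
    · have hTB : IsFinPart 𝒜L (pairPart B) := pairPart_isFinPart h𝒜L hB hBne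
      have hBmem : B ∈ pairPart B := Finset.mem_filter.2 ⟨by simp, hBne⟩
      have hinfB : infOn H X B = 1 := by
        have hset : setOn H X B = {1} := by
          ext y
          constructor
          · rintro ⟨i, hi, rfl⟩; exact hind1 i hi
          · rintro rfl
            obtain ⟨i, hi⟩ := exists_atom_subset h𝒜L hB hBne
            exact ⟨i, hi, (hind1 i hi).symm⟩
        rw [infOn, hset, csInf_singleton]
      have hterm : μ B = infOn H X B * μ B := by rw [hinfB, one_mul]
      calc μ B = infOn H X B * μ B := hterm
        _ ≤ lowSum H X μ (pairPart B) := Finset.single_le_sum (f := fun A => infOn H X A * μ A)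
            (fun A hA => mul_nonneg (infOn_nonneg hX A)
              ((hμ.1 _ (hTB.1 (Finset.mem_coe.2 hA))).1)) hBmem
        _ ≤ lowerSInt H 𝒜L X μ := lowSum_le_lowerSInt hΩ hH h𝒜L hμ hX hTB

end Aux14c
section Aux14d

variable {Ω ι : Type*} {H : ι → Set Ω} {𝒜L : Set (Set Ω)} {X Y Z : ι → ℝ} {μ : Set Ω → ℝ}

lemma refine_le_upSum_left (h𝒜L : IsFieldOver H 𝒜L)
    (hμ : IsFAP 𝒜L μ) (hX : ∀ i, 0 ≤ X i ∧ X i ≤ 1)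
    {T T' : Finset (Set Ω)} (hT : IsFinPart 𝒜L T) (hT' : IsFinPart 𝒜L T') :
    upSum H X μ (refineP T T') ≤ upSum H X μ T := by
  unfold upSum
  rw [sum_refineP hT hT' _ (fun A hA B hB h => by
    rw [h, FAP.empty h𝒜L.1 hμ, mul_zero])]
  apply Finset.sum_le_sum
  intro A hA
  have hAm := hT.1 (Finset.mem_coe.2 hA)
  have : μ A = ∑ B ∈ T', μ (A ∩ B) := by
    rw [← sum_inter_part h𝒜L hμ hT' hAm]
    exact Finset.sum_congr rfl fun B _ => by rw [Set.inter_comm]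
  rw [this, Finset.mul_sum]
  apply Finset.sum_le_sum
  intro B hB
  have hABm : A ∩ B ∈ 𝒜L := SF.inter_mem h𝒜L.1 hAm (hT'.1 (Finset.mem_coe.2 hB))
  rcases Set.eq_empty_or_nonempty (A ∩ B) with h | h
  · rw [h, FAP.empty h𝒜L.1 hμ, mul_zero, mul_zero]
  · exact mul_le_mul_of_nonneg_right
      (supOn_mono hX h𝒜L hABm Set.inter_subset_left h) ((hμ.1 _ hABm).1)

lemma lowerSInt_superadd (hΩ : (Set.univ : Set Ω).Nonempty) (hH : IsPartition H)
    (h𝒜L : IsFieldOver H 𝒜L) (hμ : IsFAP 𝒜L μ)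
    (hX : ∀ i, 0 ≤ X i ∧ X i ≤ 1) (hY : ∀ i, 0 ≤ Y i ∧ Y i ≤ 1)
    (hZ : ∀ i, 0 ≤ Z i ∧ Z i ≤ 1) (hZeq : ∀ i, Z i = X i + Y i) :
    lowerSInt H 𝒜L X μ + lowerSInt H 𝒜L Y μ ≤ lowerSInt H 𝒜L Z μ := by
  have key : ∀ T : Finset (Set Ω), IsFinPart 𝒜L T → ∀ T' : Finset (Set Ω),
      IsFinPart 𝒜L T' → lowSum H X μ T + lowSum H Y μ T' ≤ lowerSInt H 𝒜L Z μ := by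
    intro T hT T' hT'
    set R := refineP T T' with hRdef
    have hR : IsFinPart 𝒜L R := refineP_isFinPart hT hT' h𝒜L
    have h1 : lowSum H X μ T ≤ lowSum H X μ R := lowSum_le_refine hH h𝒜L hμ hX hT hT'
    have h2 : lowSum H Y μ T' ≤ lowSum H Y μ R := by
      have hsym : lowSum H Y μ T' ≤ lowSum H Y μ (refineP T' T) :=
        lowSum_le_refine hH h𝒜L hμ hY hT' hT
      -- use refineP T T' directly via a symmetric argument: do it from scratch
      unfold lowSum
      rw [hRdef, sum_refineP hT hT' _ (fun A hA B hB h => by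
        rw [h, FAP.empty h𝒜L.1 hμ, mul_zero]), Finset.sum_comm]
      apply Finset.sum_le_sum
      intro B hB
      have hBm := hT'.1 (Finset.mem_coe.2 hB)
      have : μ B = ∑ A ∈ T, μ (A ∩ B) := (sum_inter_part h𝒜L hμ hT hBm).symm
      rw [this, Finset.mul_sum]
      apply Finset.sum_le_sum
      intro A hA
      have hABm : A ∩ B ∈ 𝒜L := SF.inter_mem h𝒜L.1 (hT.1 (Finset.mem_coe.2 hA)) hBm
      rcases Set.eq_empty_or_nonempty (A ∩ B) with h | h
      · rw [h, FAP.empty h𝒜L.1 hμ, mul_zero, mul_zero]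
      · exact mul_le_mul_of_nonneg_right
          (infOn_mono hY h𝒜L hABm Set.inter_subset_right h) ((hμ.1 _ hABm).1)
    have h3 : lowSum H X μ R + lowSum H Y μ R ≤ lowSum H Z μ R := by
      unfold lowSum
      rw [← Finset.sum_add_distrib]
      apply Finset.sum_le_sum
      intro C hC
      have hCm := hR.1 (Finset.mem_coe.2 hC)
      have hCne := hR.2.1 C hC
      have hinf : infOn H X C + infOn H Y C ≤ infOn H Z C := by
        apply le_csInf (setOn_nonempty h𝒜L hCm hCne)
        rintro z ⟨i, hi, rfl⟩
        have := csInf_le (setOn_bddBelow hX C) (⟨i, hi, rfl⟩ : X i ∈ setOn H X C)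
        have := csInf_le (setOn_bddBelow hY C) (⟨i, hi, rfl⟩ : Y i ∈ setOn H Y C)
        rw [hZeq i]
        unfold infOn at *
        linarith
      have hμC := (hμ.1 _ hCm).1
      nlinarith [hμC, hinf]
    exact le_trans (by linarith) (lowSum_le_lowerSInt hΩ hH h𝒜L hμ hZ hR)
  rw [lowerSInt_eq_sSup H 𝒜L X μ, lowerSInt_eq_sSup H 𝒜L Y μ]
  rw [← le_sub_iff_add_le]
  apply csSup_le (LSet_nonempty hΩ h𝒜L)
  rintro x ⟨T, hT, rfl⟩
  rw [le_sub_iff_add_le, add_comm, ← le_sub_iff_add_le]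
  apply csSup_le (LSet_nonempty hΩ h𝒜L)
  rintro y ⟨T', hT', rfl⟩
  rw [le_sub_iff_add_le, add_comm]
  exact key T hT T' hT'

lemma upperSInt_subadd (hΩ : (Set.univ : Set Ω).Nonempty) (hH : IsPartition H)
    (h𝒜L : IsFieldOver H 𝒜L) (hμ : IsFAP 𝒜L μ)
    (hX : ∀ i, 0 ≤ X i ∧ X i ≤ 1) (hY : ∀ i, 0 ≤ Y i ∧ Y i ≤ 1)
    (hZ : ∀ i, 0 ≤ Z i ∧ Z i ≤ 1) (hZeq : ∀ i, Z i = X i + Y i) :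
    upperSInt H 𝒜L Z μ ≤ upperSInt H 𝒜L X μ + upperSInt H 𝒜L Y μ := by
  have key : ∀ T : Finset (Set Ω), IsFinPart 𝒜L T → ∀ T' : Finset (Set Ω),
      IsFinPart 𝒜L T' → upperSInt H 𝒜L Z μ ≤ upSum H X μ T + upSum H Y μ T' := by
    intro T hT T' hT'
    set R := refineP T T' with hRdef
    have hR : IsFinPart 𝒜L R := refineP_isFinPart hT hT' h𝒜L
    have h1 : upSum H X μ R ≤ upSum H X μ T := refine_le_upSum_left h𝒜L hμ hX hT hT'
    have h2 : upSum H Y μ R ≤ upSum H Y μ T' := refine_le_upSum hH h𝒜L hμ hY hT hT'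
    have h3 : upSum H Z μ R ≤ upSum H X μ R + upSum H Y μ R := by
      unfold upSum
      rw [← Finset.sum_add_distrib]
      apply Finset.sum_le_sum
      intro C hC
      have hCm := hR.1 (Finset.mem_coe.2 hC)
      have hCne := hR.2.1 C hC
      have hsup : supOn H Z C ≤ supOn H X C + supOn H Y C := by
        apply csSup_le (setOn_nonempty h𝒜L hCm hCne)
        rintro z ⟨i, hi, rfl⟩
        have := le_csSup (setOn_bddAbove hX C) (⟨i, hi, rfl⟩ : X i ∈ setOn H X C)
        have := le_csSup (setOn_bddAbove hY C) (⟨i, hi, rfl⟩ : Y i ∈ setOn H Y C)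
        rw [hZeq i]
        unfold supOn at *
        linarith
      have hμC := (hμ.1 _ hCm).1
      nlinarith [hμC, hsup]
    exact le_trans (upperSInt_le_upSum h𝒜L hμ hZ hR) (by linarith)
  rw [upperSInt_eq_sInf H 𝒜L X μ, upperSInt_eq_sInf H 𝒜L Y μ]
  rw [← sub_le_iff_le_add]
  apply le_csInf (USet_nonempty hΩ h𝒜L)
  rintro x ⟨T, hT, rfl⟩
  rw [sub_le_iff_le_add, ← sub_le_iff_le_add']
  apply le_csInf (USet_nonempty hΩ h𝒜L)
  rintro y ⟨T', hT', rfl⟩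
  rw [sub_le_iff_le_add']
  exact key T hT T' hT'

/-- `𝒜L`-continuous `[0,1]`-valued functions are S-integrable. -/
lemma upperSInt_le_lowerSInt_of_ALcont (hΩ : (Set.univ : Set Ω).Nonempty)
    (hH : IsPartition H) (h𝒜L : IsFieldOver H 𝒜L) (hμ : IsFAP 𝒜L μ)
    (hX : ∀ i, 0 ≤ X i ∧ X i ≤ 1) (hc : ALContinuous H 𝒜L X) :
    upperSInt H 𝒜L X μ ≤ lowerSInt H 𝒜L X μ := by
  apply le_of_forall_pos_le_add
  intro ε hε
  set δ := ε / 3 with hδdef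
  have hδ : 0 < δ := by positivity
  obtain ⟨n, hn⟩ := exists_nat_gt (1 / δ)
  have hnδ : 1 < (n : ℝ) * δ := by
    rw [div_lt_iff₀ hδ] at hn
    linarith
  choose B hB1 hB2 hB3 using fun k : ℕ => hc.2 (((k : ℝ) - 1) * δ) δ hδ
  set A : ℕ → Set Ω := fun k =>
    if k = 0 then Set.univ else if n + 1 ≤ k then ∅ else B k with hAdef
  have hA0 : A 0 = Set.univ := by simp [hAdef]
  have hAtop : ∀ k, n + 1 ≤ k → A k = ∅ := by
    intro k hk
    have hk0 : k ≠ 0 := by omega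
    simp [hAdef, hk0, hk]
    intro h; omega
  have hAmid : ∀ k, k ≠ 0 → ¬(n + 1 ≤ k) → A k = B k := by
    intro k h1 h2; simp [hAdef, h1, h2]
    intro h; omega
  have hAmem : ∀ k, A k ∈ 𝒜L := by
    intro k
    by_cases h1 : k = 0
    · rw [h1, hA0]; exact h𝒜L.1.1
    by_cases h2 : n + 1 ≤ k
    · rw [hAtop k h2]; exact SF.empty_mem h𝒜L.1
    · rw [hAmid k h1 h2]; exact hB1 k
  have hmono : ∀ {c₁ c₂ : ℝ}, c₂ ≤ c₁ →
      (⋃ i ∈ {i | c₁ ≤ X i}, H i) ⊆ ⋃ i ∈ {i | c₂ ≤ X i}, H i := by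
    intro c₁ c₂ h
    exact Set.biUnion_subset_biUnion_left fun i hi => le_trans h hi
  have hanti : ∀ k, A (k + 1) ⊆ A k := by
    intro k
    by_cases h1 : k = 0
    · rw [h1, hA0]; exact Set.subset_univ _
    by_cases h2 : n + 1 ≤ k + 1
    · rw [hAtop _ h2]; exact Set.empty_subset _
    have h2' : ¬(n + 1 ≤ k) := by omega
    rw [hAmid _ (by omega) h2, hAmid _ h1 h2']
    calc B (k+1) ⊆ ⋃ i ∈ {i | ((k+1 : ℕ) : ℝ) * δ - δ ≤ X i}, H i := by
          have := hB3 (k+1)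
          convert this using 3
          push_cast; ring_nf
      _ ⊆ ⋃ i ∈ {i | (((k : ℕ) : ℝ) - 1) * δ + δ ≤ X i}, H i := by
          apply hmono
          push_cast; nlinarith [hδ.le]
      _ ⊆ B k := hB2 k
  have hAntitone : Antitone A := antitone_nat_of_succ_le hanti
  have hlow : ∀ k i, k ≠ 0 → ¬(n + 1 ≤ k) → H i ⊆ A k → ((k : ℝ) - 1) * δ ≤ X i := by
    intro k i h1 h2 hi
    rw [hAmid k h1 h2] at hi
    exact atom_in_union hH (hi.trans (hB3 k))
  have hup : ∀ k i, k ≤ n → H i ∩ A (k + 1) = ∅ → X i < ((k : ℝ) + 1) * δ := by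
    intro k i hk hdisj
    by_contra hcon
    push_neg at hcon
    by_cases h2 : n + 1 ≤ k + 1
    · have hkn : k = n := by omega
      have : X i ≤ 1 := (hX i).2
      rw [hkn] at hcon
      nlinarith
    · have hsub : H i ⊆ A (k + 1) := by
        rw [hAmid _ (by omega) h2]
        refine Set.Subset.trans ?_ (hB2 (k+1))
        apply Set.subset_biUnion_of_mem
        show (((k+1 : ℕ) : ℝ) - 1) * δ + δ ≤ X i
        push_cast
        nlinarith
      obtain ⟨x, hx⟩ := hH.1 i
      exact absurd hdisj (by
        rw [← Set.not_nonempty_iff_eq_empty]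
        push_neg
        exact ⟨x, hx, hsub hx⟩)
  set C : ℕ → Set Ω := fun k => A k ∩ (A (k + 1))ᶜ with hCdef
  have hCmem : ∀ k, C k ∈ 𝒜L := fun k =>
    SF.inter_mem h𝒜L.1 (hAmem k) (h𝒜L.1.2.1 _ (hAmem (k+1)))
  set Tε : Finset (Set Ω) :=
    ((Finset.range (n + 1)).image C).filter (fun D => D.Nonempty) with hTεdef
  have hmemTε : ∀ D, D ∈ Tε ↔ (∃ k ≤ n, D = C k) ∧ D.Nonempty := by
    intro D
    simp only [hTεdef, Finset.mem_filter, Finset.mem_image, Finset.mem_range,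
      Nat.lt_succ_iff]
    constructor
    · rintro ⟨⟨k, hk, rfl⟩, hne⟩; exact ⟨⟨k, hk, rfl⟩, hne⟩
    · rintro ⟨⟨k, hk, rfl⟩, hne⟩; exact ⟨⟨k, hk, rfl⟩, hne⟩
  have hCdisj : ∀ k l, k < l → Disjoint (C k) (C l) := by
    intro k l hkl
    rw [Set.disjoint_left]
    intro x hxk hxl
    exact hxk.2 (hAntitone (by omega : k + 1 ≤ l) hxl.1)
  have hTεpart : IsFinPart 𝒜L Tε := by
    refine ⟨?_, ?_, ?_, ?_⟩
    · intro D hD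
      obtain ⟨⟨k, -, rfl⟩, -⟩ := (hmemTε D).1 (Finset.mem_coe.1 hD)
      exact hCmem k
    · intro D hD; exact ((hmemTε D).1 hD).2
    · intro D hD D' hD' hne
      obtain ⟨⟨k, -, rfl⟩, -⟩ := (hmemTε D).1 hD
      obtain ⟨⟨l, -, rfl⟩, -⟩ := (hmemTε D').1 hD'
      rcases lt_trichotomy k l with h | h | h
      · exact hCdisj k l h
      · exact absurd (by rw [h]) hne
      · exact (hCdisj l k h).symm
    · apply Set.eq_univ_of_forall
      intro x
      have hex : ∃ k, x ∉ A k := ⟨n + 1, by rw [hAtop _ le_rfl]; simp⟩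
      have hm := Nat.find_spec hex
      have hmlt := fun j (hj : j < Nat.find hex) => not_not.1 (Nat.find_min hex hj)
      have hm0 : Nat.find hex ≠ 0 := by
        intro h0
        rw [h0, hA0] at hm
        exact hm trivial
      obtain ⟨m', hm'⟩ : ∃ m', Nat.find hex = m' + 1 :=
        ⟨Nat.find hex - 1, by omega⟩
      have hxC : x ∈ C m' := by
        refine ⟨hmlt m' (by omega), ?_⟩
        rw [← hm']
        exact hm
      have hm'n : m' ≤ n := by
        have : Nat.find hex ≤ n + 1 := Nat.find_le (by rw [hAtop _ le_rfl]; simp)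
        omega
      exact ⟨C m', Finset.mem_coe.2 ((hmemTε (C m')).2 ⟨⟨m', hm'n, rfl⟩, ⟨x, hxC⟩⟩), hxC⟩
  have hgap : ∀ D ∈ Tε, supOn H X D ≤ infOn H X D + 2 * δ := by
    intro D hD
    obtain ⟨⟨k, hk, rfl⟩, hne⟩ := (hmemTε D).1 hD
    have hDm := hCmem k
    have hinf : ((k : ℝ) - 1) * δ ≤ infOn H X (C k) := by
      by_cases h1 : k = 0
      · rw [h1]
        have := infOn_nonneg (H := H) hX (C 0)
        push_cast
        nlinarith
      · apply le_csInf (setOn_nonempty h𝒜L hDm hne)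
        rintro y ⟨i, hi, rfl⟩
        exact hlow k i h1 (by omega) (hi.trans Set.inter_subset_left)
    have hsup : supOn H X (C k) ≤ ((k : ℝ) + 1) * δ := by
      apply csSup_le (setOn_nonempty h𝒜L hDm hne)
      rintro y ⟨i, hi, rfl⟩
      refine le_of_lt (hup k i hk ?_)
      apply Set.eq_empty_iff_forall_notMem.2
      rintro x ⟨hx1, hx2⟩
      exact (hi.trans Set.inter_subset_right) hx1 hx2
    nlinarith
  have hupsum : upSum H X μ Tε ≤ lowSum H X μ Tε + 2 * δ := by
    have h1 : upSum H X μ Tε ≤ ∑ D ∈ Tε, (infOn H X D * μ D + 2 * δ * μ D) := by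
      apply Finset.sum_le_sum
      intro D hD
      have hμD := (hμ.1 _ (hTεpart.1 (Finset.mem_coe.2 hD))).1
      nlinarith [hgap D hD]
    rw [Finset.sum_add_distrib, ← Finset.mul_sum, sum_part_eq_one h𝒜L hμ hTεpart,
      mul_one] at h1
    exact h1
  calc upperSInt H 𝒜L X μ ≤ upSum H X μ Tε := upperSInt_le_upSum h𝒜L hμ hX hTεpart
    _ ≤ lowSum H X μ Tε + 2 * δ := hupsum
    _ ≤ lowerSInt H 𝒜L X μ + ε := by
        have := lowSum_le_lowerSInt hΩ hH h𝒜L hμ hX hTεpart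
        rw [hδdef]
        linarith

/-- Additivity of the lower Stieltjes integral for `𝒜L`-continuous integrands. -/
lemma lowerSInt_add (hΩ : (Set.univ : Set Ω).Nonempty) (hH : IsPartition H)
    (h𝒜L : IsFieldOver H 𝒜L) (hμ : IsFAP 𝒜L μ)
    (hX : ∀ i, 0 ≤ X i ∧ X i ≤ 1) (hY : ∀ i, 0 ≤ Y i ∧ Y i ≤ 1)
    (hZ : ∀ i, 0 ≤ Z i ∧ Z i ≤ 1) (hZeq : ∀ i, Z i = X i + Y i)
    (hcX : ALContinuous H 𝒜L X) (hcY : ALContinuous H 𝒜L Y) :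
    lowerSInt H 𝒜L Z μ = lowerSInt H 𝒜L X μ + lowerSInt H 𝒜L Y μ := by
  apply le_antisymm
  · calc lowerSInt H 𝒜L Z μ ≤ upperSInt H 𝒜L Z μ :=
          lowerSInt_le_upperSInt hΩ hH h𝒜L hμ hZ
      _ ≤ upperSInt H 𝒜L X μ + upperSInt H 𝒜L Y μ :=
          upperSInt_subadd hΩ hH h𝒜L hμ hX hY hZ hZeq
      _ ≤ lowerSInt H 𝒜L X μ + lowerSInt H 𝒜L Y μ := by
          have h1 := upperSInt_le_lowerSInt_of_ALcont hΩ hH h𝒜L hμ hX hcX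
          have h2 := upperSInt_le_lowerSInt_of_ALcont hΩ hH h𝒜L hμ hY hcY
          linarith
  · exact lowerSInt_superadd hΩ hH h𝒜L hμ hX hY hZ hZeq

end Aux14d
section Aux14e

variable {Ω ι : Type*} {H : ι → Set Ω} {𝒜L : Set (Set Ω)} {Y : ι → ℝ} {μ ν : Set Ω → ℝ}

/-- The product rule for the lower Stieltjes integral: integrating `Y·1_G` with respect
to `μ` equals `μ G` times the integral of `Y` with respect to the conditional `ν`. -/
lemma lowerSInt_prod (hΩ : (Set.univ : Set Ω).Nonempty) (hH : IsPartition H)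
    (h𝒜L : IsFieldOver H 𝒜L) (hμ : IsFAP 𝒜L μ) (hν : IsFAP 𝒜L ν)
    {G : Set Ω} (hG : G ∈ 𝒜L) (hGne : G.Nonempty)
    (hY : ∀ i, 0 ≤ Y i ∧ Y i ≤ 1)
    (hrel : ∀ B ∈ 𝒜L, μ (B ∩ G) = μ G * ν B)
    {X : ι → ℝ} (hXdef : ∀ i, X i = if H i ⊆ G then Y i else 0) :
    lowerSInt H 𝒜L X μ = μ G * lowerSInt H 𝒜L Y ν := by
  have hX : ∀ i, 0 ≤ X i ∧ X i ≤ 1 := by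
    intro i
    rw [hXdef i]
    by_cases h : H i ⊆ G
    · simp only [if_pos h]; exact hY i
    · simp only [if_neg h]; norm_num
  have hμG0 : 0 ≤ μ G := (hμ.1 _ hG).1
  -- infOn X vanishes on pieces inside Gᶜ
  have hinf0 : ∀ C ∈ 𝒜L, C.Nonempty → C ⊆ Gᶜ → infOn H X C = 0 := by
    intro C hCm hCne hsub
    have hset : setOn H X C = {0} := by
      ext y
      constructor
      · rintro ⟨i, hi, rfl⟩
        have : ¬ H i ⊆ G := by
          intro hcon
          obtain ⟨x, hx⟩ := hH.1 i
          exact (hi.trans hsub) hx (hcon hx)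
        rw [hXdef i, if_neg this]; rfl
      · rintro rfl
        obtain ⟨i, hi⟩ := exists_atom_subset h𝒜L hCm hCne
        have : ¬ H i ⊆ G := by
          intro hcon
          obtain ⟨x, hx⟩ := hH.1 i
          exact (hi.trans hsub) hx (hcon hx)
        exact ⟨i, hi, by rw [hXdef i, if_neg this]⟩
    rw [infOn, hset, csInf_singleton]
  have hinfeq : ∀ C ∈ 𝒜L, C ⊆ G → infOn H X C = infOn H Y C := by
    intro C hCm hsub
    have hset : setOn H X C = setOn H Y C := by
      ext y
      constructor
      · rintro ⟨i, hi, rfl⟩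
        exact ⟨i, hi, by rw [hXdef i, if_pos (hi.trans hsub)]⟩
      · rintro ⟨i, hi, rfl⟩
        exact ⟨i, hi, by rw [hXdef i, if_pos (hi.trans hsub)]⟩
    rw [infOn, infOn, hset]
  rcases eq_or_lt_of_le hμG0 with hc0 | hcpos
  · -- μ G = 0 : both sides vanish
    rw [← hc0, zero_mul]
    apply le_antisymm
    · apply lowerSInt_le_of_forall hΩ h𝒜L
      intro T hT
      have hR : IsFinPart 𝒜L (refineP T (pairPart G)) :=
        refineP_isFinPart hT (pairPart_isFinPart h𝒜L hG hGne) h𝒜L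
      refine le_trans (lowSum_le_refine hH h𝒜L hμ hX hT
        (pairPart_isFinPart h𝒜L hG hGne)) (le_of_eq ?_)
      apply Finset.sum_eq_zero
      intro C hC
      have hCm := hR.1 (Finset.mem_coe.2 hC)
      have hCne := hR.2.1 C hC
      rcases refine_pair_subset hC with hsub | hsub
      · have : μ C = 0 := le_antisymm
          (by rw [hc0]; exact FAP.mono_subset h𝒜L.1 hμ hCm hG hsub) ((hμ.1 _ hCm).1)
        rw [this, mul_zero]
      · rw [hinf0 C hCm hCne hsub, zero_mul]
    · exact lowerSInt_nonneg hΩ hH h𝒜L hμ hX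
  · -- μ G > 0
    have hνGc : ∀ C ∈ 𝒜L, C ⊆ Gᶜ → ν C = 0 := by
      intro C hCm hsub
      have h1 : μ (C ∩ G) = μ G * ν C := hrel C hCm
      have h2 : C ∩ G = ∅ := by
        apply Set.eq_empty_iff_forall_notMem.2
        rintro x ⟨hx1, hx2⟩
        exact hsub hx1 hx2
      rw [h2, FAP.empty h𝒜L.1 hμ] at h1
      have := hcpos
      nlinarith [h1]
    have hkey : ∀ T : Finset (Set Ω), IsFinPart 𝒜L T →
        lowSum H X μ (refineP T (pairPart G)) =
          μ G * lowSum H Y ν (refineP T (pairPart G)) := by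
      intro T hT
      have hR : IsFinPart 𝒜L (refineP T (pairPart G)) :=
        refineP_isFinPart hT (pairPart_isFinPart h𝒜L hG hGne) h𝒜L
      rw [lowSum, lowSum, Finset.mul_sum]
      apply Finset.sum_congr rfl
      intro C hC
      have hCm := hR.1 (Finset.mem_coe.2 hC)
      have hCne := hR.2.1 C hC
      rcases refine_pair_subset hC with hsub | hsub
      · rw [hinfeq C hCm hsub]
        have : μ C = μ G * ν C := by
          rw [← hrel C hCm, Set.inter_eq_self_of_subset_left hsub]
        rw [this]; ring
      · rw [hinf0 C hCm hCne hsub, hνGc C hCm hsub]; ring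
    apply le_antisymm
    · apply lowerSInt_le_of_forall hΩ h𝒜L
      intro T hT
      have hR : IsFinPart 𝒜L (refineP T (pairPart G)) :=
        refineP_isFinPart hT (pairPart_isFinPart h𝒜L hG hGne) h𝒜L
      calc lowSum H X μ T ≤ lowSum H X μ (refineP T (pairPart G)) :=
            lowSum_le_refine hH h𝒜L hμ hX hT (pairPart_isFinPart h𝒜L hG hGne)
        _ = μ G * lowSum H Y ν (refineP T (pairPart G)) := hkey T hT
        _ ≤ μ G * lowerSInt H 𝒜L Y ν := by
            apply mul_le_mul_of_nonneg_left _ hμG0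
            exact lowSum_le_lowerSInt hΩ hH h𝒜L hν hY hR
    · have h2 : lowerSInt H 𝒜L Y ν ≤ lowerSInt H 𝒜L X μ / μ G := by
        apply lowerSInt_le_of_forall hΩ h𝒜L
        intro T hT
        rw [le_div_iff₀ hcpos]
        have hR : IsFinPart 𝒜L (refineP T (pairPart G)) :=
          refineP_isFinPart hT (pairPart_isFinPart h𝒜L hG hGne) h𝒜L
        calc lowSum H Y ν T * μ G ≤ lowSum H Y ν (refineP T (pairPart G)) * μ G := by
              apply mul_le_mul_of_nonneg_right _ hμG0
              exact lowSum_le_refine hH h𝒜L hν hY hT (pairPart_isFinPart h𝒜L hG hGne)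
          _ = lowSum H X μ (refineP T (pairPart G)) := by rw [hkey T hT]; ring
          _ ≤ lowerSInt H 𝒜L X μ := lowSum_le_lowerSInt hΩ hH h𝒜L hμ hX hR
      calc μ G * lowerSInt H 𝒜L Y ν ≤ μ G * (lowerSInt H 𝒜L X μ / μ G) :=
            mul_le_mul_of_nonneg_left h2 hμG0
        _ = lowerSInt H 𝒜L X μ := by field_simp

end Aux14e
/-- for `π̃^p ∈ 𝒫^p`, the function
`P̃^fd(F|K) = ∫ σ(F|Hᵢ) π̃^p(dHᵢ|K)` is a conditional probability on `𝒜 × 𝒜L⁰`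
extending `{P^d, σ, π̃^p}`. -/
theorem statement14 {Ω ι κ : Type*} [Nonempty Ω] (H : ι → Set Ω) (E : κ → Set Ω)
    (𝒜L 𝒜E 𝒜 : Set (Set Ω))
    (hH : IsPartition H) (hE : IsPartition E)
    (h𝒜L : IsFieldOver H 𝒜L) (h𝒜E : IsFieldOver E 𝒜E)
    (h𝒜 : IsJointField H E 𝒜L 𝒜E 𝒜)
    (π : Set Ω → ℝ) (hπ : IsFAP 𝒜L π)
    (σ : Set Ω → ι → ℝ) (hσ : IsStrategy 𝒜 H σ)
    (hcont : ∀ F ∈ 𝒜, ALContinuous H 𝒜L fun i => σ F i)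
    (π' : Set Ω → Set Ω → ℝ)
    (hπ' : ∃ P ∈ FCPSet 𝒜 𝒜L H π σ, ∀ B ∈ 𝒜L, ∀ K ∈ 𝒜L, K.Nonempty → π' B K = P B K)
    (Pfd : Set Ω → Set Ω → ℝ)
    (hPfd : ∀ F K, Pfd F K = lowerSInt H 𝒜L (fun i => σ F i) fun B => π' B K) :
    (∀ E' ∈ 𝒜, ∀ K ∈ 𝒜L, K.Nonempty → Pfd E' K = Pfd (E' ∩ K) K) ∧
    (∀ K ∈ 𝒜L, K.Nonempty → IsFAP 𝒜 fun E' => Pfd E' K) ∧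
    (∀ E' ∈ 𝒜, ∀ F ∈ 𝒜, ∀ K ∈ 𝒜L, K.Nonempty → E' ∩ K ∈ 𝒜L → (E' ∩ K).Nonempty →
      Pfd (E' ∩ F) K = Pfd E' K * Pfd F (E' ∩ K)) ∧
    (∀ F ∈ 𝒜, Pfd F Set.univ = lowerSInt H 𝒜L (fun i => σ F i) π) ∧
    (∀ F ∈ 𝒜, ∀ i, Pfd F (H i) = σ F i) ∧
    (∀ B ∈ 𝒜L, ∀ K ∈ 𝒜L, K.Nonempty → Pfd B K = π' B K) := by
  obtain ⟨P, ⟨hPfcp, hPext⟩, hπ'P⟩ := hπ'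
  have hΩ : (Set.univ : Set Ω).Nonempty := Set.univ_nonempty
  have h𝒜LF : IsSetField 𝒜L := h𝒜L.1
  have h𝒜F : IsSetField 𝒜 := h𝒜.1
  have hLA : 𝒜L ⊆ 𝒜 := h𝒜.2.1
  have hσb : ∀ F, F ∈ 𝒜 → ∀ i, 0 ≤ σ F i ∧ σ F i ≤ 1 := fun F hF i => (hσ i).1.1 F hF
  -- conditional measures of P restricted to 𝒜L
  have hPK : ∀ K ∈ 𝒜L, K.Nonempty → IsFAP 𝒜L fun B => P B K :=
    fun K hK hKne => FAP.restrict hLA h𝒜LF (hPfcp.2.1 K (hLA hK) hKne)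
  have hPKK : ∀ K ∈ 𝒜L, K.Nonempty → P K K = 1 := by
    intro K hK hKne
    have h1 := hPfcp.1 Set.univ h𝒜F.1 K (hLA hK) hKne
    have h2 : P Set.univ K = 1 := (hPfcp.2.1 K (hLA hK) hKne).2.1
    rw [Set.univ_inter] at h1
    rw [← h1]; exact h2
  have hPKc : ∀ K ∈ 𝒜L, K.Nonempty → P Kᶜ K = 0 := by
    intro K hK hKne
    rw [FAP.compl h𝒜LF (hPK K hK hKne) hK, hPKK K hK hKne]; ring
  -- Pfd expressed via P
  have hPfd' : ∀ F, ∀ K ∈ 𝒜L, K.Nonempty →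
      Pfd F K = lowerSInt H 𝒜L (fun i => σ F i) fun B => P B K := by
    intro F K hK hKne
    rw [hPfd F K]
    exact lowerSInt_congr_meas fun B hB => hπ'P B hB K hK hKne
  -- σ(·|i) indicator values on members of 𝒜L ⊆ 𝒜
  have hind1 : ∀ B ∈ 𝒜, ∀ i, H i ⊆ B → σ B i = 1 := fun B hB i h => (hσ i).2 B hB h
  have hind0 : ∀ B ∈ 𝒜, ∀ i, H i ∩ B = ∅ → σ B i = 0 := by
    intro B hB i h
    have hsub : H i ⊆ Bᶜ := by
      intro x hx hxB
      exact absurd h (by rw [← Set.not_nonempty_iff_eq_empty]; push_neg; exact ⟨x, hx, hxB⟩)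
    have h1 : σ Bᶜ i = 1 := (hσ i).2 Bᶜ (h𝒜F.2.1 _ hB) hsub
    have h2 : σ Bᶜ i = 1 - σ B i := FAP.compl h𝒜F (hσ i).1 hB
    linarith
  -- conjunct 6 (and its P-version), proved first
  have h6 : ∀ B ∈ 𝒜L, ∀ K ∈ 𝒜L, K.Nonempty → Pfd B K = P B K := by
    intro B hB K hK hKne
    rw [hPfd' B K hK hKne]
    exact lowerSInt_indicator hΩ hH h𝒜L (hPK K hK hKne) hB (hσb B (hLA hB))
      (fun i h => hind1 B (hLA hB) i h) (fun i h => hind0 B (hLA hB) i h)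
  -- conjunct 1
  have h1 : ∀ E' ∈ 𝒜, ∀ K ∈ 𝒜L, K.Nonempty → Pfd E' K = Pfd (E' ∩ K) K := by
    intro E' hE' K hK hKne
    have hEK : E' ∩ K ∈ 𝒜 := SF.inter_mem h𝒜F hE' (hLA hK)
    rw [hPfd' E' K hK hKne, hPfd' (E' ∩ K) K hK hKne]
    apply lowerSInt_congr_null hΩ hH h𝒜L (hPK K hK hKne) hK hKne (hPKc K hK hKne)
      (hσb E' hE') (hσb _ hEK)
    intro i hi
    have hK1 : σ K i = 1 := (hσ i).2 K (hLA hK) hi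
    exact (FAP.inter_of_one h𝒜F (hσ i).1 hE' (hLA hK) hK1).symm
  refine ⟨h1, ?_, ?_, ?_, ?_, ?_⟩
  · -- conjunct 2 : FAP
    intro K hK hKne
    refine ⟨?_, ?_, ?_⟩
    · intro A hA
      show 0 ≤ Pfd A K ∧ Pfd A K ≤ 1
      rw [hPfd' A K hK hKne]
      exact ⟨lowerSInt_nonneg hΩ hH h𝒜L (hPK K hK hKne) (hσb A hA),
        lowerSInt_le_one hΩ hH h𝒜L (hPK K hK hKne) (hσb A hA)⟩
    · show Pfd Set.univ K = 1
      rw [hPfd' Set.univ K hK hKne]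
      exact lowerSInt_const hΩ h𝒜L (hPK K hK hKne) fun i => (hσ i).1.2.1
    · intro A hA B hB hd
      have hAB : A ∪ B ∈ 𝒜 := h𝒜F.2.2 _ hA _ hB
      show Pfd (A ∪ B) K = Pfd A K + Pfd B K
      rw [hPfd' A K hK hKne, hPfd' B K hK hKne, hPfd' (A ∪ B) K hK hKne]
      exact lowerSInt_add hΩ hH h𝒜L (hPK K hK hKne) (hσb A hA) (hσb B hB)
        (hσb _ hAB) (fun i => (hσ i).1.2.2 A hA B hB hd) (hcont A hA) (hcont B hB)
  · -- conjunct 3 : product rule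
    intro E' hE' F hF K hK hKne hEKL hEKne
    set G := E' ∩ K with hGdef
    have hGK : G ⊆ K := Set.inter_subset_right
    -- Pfd E' K = P G K
    have hstepA : Pfd E' K = P G K := by
      rw [h1 E' hE' K hK hKne, ← hGdef]
      exact h6 G hEKL K hK hKne
    -- the multiplicative relation for P
    have hrel : ∀ B ∈ 𝒜L, P (B ∩ G) K = P G K * P B G := by
      intro B hB
      have hGKeq : G ∩ K = G := Set.inter_eq_self_of_subset_left hGK
      have h3 := hPfcp.2.2 G (hLA hEKL) B (hLA hB) K (hLA hK) hKne (by rw [hGKeq]; exact hEKne)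
      rw [hGKeq] at h3
      rw [Set.inter_comm B G, h3]
    -- replace the integrand using the null lemma
    have hX'' : ∀ i, 0 ≤ (if H i ⊆ G then σ F i else 0) ∧
        (if H i ⊆ G then σ F i else 0) ≤ 1 := by
      intro i
      by_cases h : H i ⊆ G
      · simp only [if_pos h]; exact hσb F hF i
      · simp only [if_neg h]; norm_num
    have hagree : ∀ i, H i ⊆ K → σ (E' ∩ F) i = if H i ⊆ G then σ F i else 0 := by
      intro i hiK
      by_cases h : H i ⊆ G
      · rw [if_pos h]
        have hE1 : σ E' i = 1 := (hσ i).2 E' hE' (h.trans Set.inter_subset_left)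
        have := FAP.inter_of_one h𝒜F (hσ i).1 hF hE' hE1
        rw [← this, Set.inter_comm]
      · rw [if_neg h]
        have hdisj : H i ∩ G = ∅ := by
          rcases atom_subset_or_disjoint hH h𝒜L hEKL i with h' | h'
          · exact absurd h' h
          · exact h'
        have hiE : H i ∩ E' = ∅ := by
          apply Set.eq_empty_iff_forall_notMem.2
          rintro x ⟨hx1, hx2⟩
          exact Set.eq_empty_iff_forall_notMem.1 hdisj x ⟨hx1, hx2, hiK hx1⟩
        have hE0 : σ E' i = 0 := hind0 E' hE' i hiE
        have hmono : σ (E' ∩ F) i ≤ σ E' i :=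
          FAP.mono_subset h𝒜F (hσ i).1 (SF.inter_mem h𝒜F hE' hF) hE' Set.inter_subset_left
        have hnn : 0 ≤ σ (E' ∩ F) i := (hσb _ (SF.inter_mem h𝒜F hE' hF) i).1
        linarith
    have hEF : E' ∩ F ∈ 𝒜 := SF.inter_mem h𝒜F hE' hF
    rw [hPfd' (E' ∩ F) K hK hKne,
      lowerSInt_congr_null hΩ hH h𝒜L (hPK K hK hKne) hK hKne (hPKc K hK hKne)
        (hσb _ hEF) hX'' hagree,
      lowerSInt_prod hΩ hH h𝒜L (hPK K hK hKne) (hPK G hEKL hEKne) hEKL hEKne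
        (hσb F hF) hrel (fun i => rfl),
      hstepA, hPfd' F G hEKL hEKne]
  · -- conjunct 4 : prior
    intro F hF
    rw [hPfd F Set.univ]
    exact lowerSInt_congr_meas fun B hB => by
      rw [hπ'P B hB Set.univ h𝒜LF.1 hΩ, hPext.1 B hB]
  · -- conjunct 5 : strategy
    intro F hF i
    have hHi : H i ∈ 𝒜L := h𝒜L.2.1 i
    have hHine : (H i).Nonempty := hH.1 i
    rw [hPfd' F (H i) hHi hHine]
    have hmeas : ∀ B ∈ 𝒜L, P B (H i) = σ B i := fun B hB => hPext.2 B (hLA hB) i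
    rw [lowerSInt_congr_meas hmeas]
    have hσFAP : IsFAP 𝒜L fun B => σ B i := FAP.restrict hLA h𝒜LF (hσ i).1
    have hHic : σ (H i)ᶜ i = 0 := by
      rw [FAP.compl h𝒜LF hσFAP hHi, (hσ i).2 (H i) (hLA hHi) subset_rfl]; ring
    rw [lowerSInt_congr_null hΩ hH h𝒜L hσFAP hHi hHine hHic (hσb F hF)
      (fun _ => hσb F hF i) (fun j hj => ?_)]
    · exact lowerSInt_const hΩ h𝒜L hσFAP fun _ => rfl
    · rcases eq_or_ne j i with rfl | hne
      · rfl
      · obtain ⟨x, hx⟩ := hH.1 j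
        exact absurd (Set.disjoint_left.1 (hH.2.1 hne) hx (hj hx)) (fun h => h)
  · -- conjunct 6
    intro B hB K hK hKne
    rw [h6 B hB K hK hKne, hπ'P B hB K hK hKne]
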